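/- arXiv:2105.06513 — 7 statements merged into one kernel-verified Lean document; each statement's English description precedes it below -/
import Mathlib

section
/- Let g ≥ 2 and b > 1 be integers with gcd(b,g) = 1, and let k ≥ 1. Set h = (g^{ord_g(b^k)} − 1)/b^k (an integer, since g^{ord_g(b^k)} ≡ 1 (mod b^k)) and d = gcd(h, b). Then ord_g(b^{k+1}) = (b/d)·ord_g(b^k). -/
/-- `ordg g m = min {n ≥ 1 : g^n ≡ 1 (mod m)}`, the multiplicative order of `g` modulo `m`. -/
noncomputable def ordg (g m : ℕ) : ℕ := sInf {n : ℕ | 0 < n ∧ g ^ n ≡ 1 [MOD m]}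

lemma binom_aux (x : ℤ) (t : ℕ) : ∃ c : ℤ, (1 + x) ^ t = 1 + t * x + c * x ^ 2 := by
  induction t with
  | zero => exact ⟨0, by ring⟩
  | succ t ih =>
    obtain ⟨c, hc⟩ := ih
    refine ⟨c + t + c * x, ?_⟩
    rw [pow_succ, hc]
    push_cast
    ring

lemma ordg_mem (g m : ℕ) (hm : 0 < m) (hgm : Nat.Coprime g m) :
    0 < ordg g m ∧ g ^ ordg g m ≡ 1 [MOD m] :=
  Nat.sInf_mem (⟨m.totient, Nat.totient_pos.mpr hm, Nat.ModEq.pow_totient hgm⟩ :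
    Set.Nonempty {n : ℕ | 0 < n ∧ g ^ n ≡ 1 [MOD m]})

lemma ordg_dvd (g m n : ℕ) (hm : 0 < m) (hgm : Nat.Coprime g m)
    (h : g ^ n ≡ 1 [MOD m]) : ordg g m ∣ n := by
  obtain ⟨he, hE⟩ := ordg_mem g m hm hgm
  set e := ordg g m with hedef
  rcases Nat.eq_zero_or_pos n with rfl | hn
  · exact dvd_zero e
  have hdiv : n = e * (n / e) + n % e := (Nat.div_add_mod n e).symm
  have hr : g ^ (n % e) ≡ 1 [MOD m] := by
    have h1 : g ^ n = (g ^ e) ^ (n / e) * g ^ (n % e) := by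
      rw [← pow_mul, ← pow_add, ← hdiv]
    have h2 : (g ^ e) ^ (n / e) * g ^ (n % e) ≡ 1 ^ (n / e) * g ^ (n % e) [MOD m] :=
      Nat.ModEq.mul ((hE.pow _)) (Nat.ModEq.refl _)
    calc g ^ (n % e) = 1 ^ (n / e) * g ^ (n % e) := by ring
      _ ≡ (g ^ e) ^ (n / e) * g ^ (n % e) [MOD m] := h2.symm
      _ = g ^ n := h1.symm
      _ ≡ 1 [MOD m] := h
  rcases Nat.eq_zero_or_pos (n % e) with h0 | hpos
  · exact Nat.dvd_of_mod_eq_zero h0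
  · have hle : e ≤ n % e := Nat.sInf_le ⟨hpos, hr⟩
    have hlt : n % e < e := Nat.mod_lt _ he
    omega

/-- For `g ≥ 2`, `b > 1` with `gcd(b,g) = 1` and `k ≥ 1`, with
`h = (g^{ord_g(b^k)} − 1)/b^k` and `d = gcd(h,b)`, one has
`ord_g(b^{k+1}) = (b/d)·ord_g(b^k)`. -/
theorem ord_succ_pow (g b k : ℕ) (hg : 2 ≤ g) (hb : 1 < b) (hbg : Nat.gcd b g = 1)
    (hk : 1 ≤ k) :
    ordg g (b ^ (k + 1))
      = (b / Nat.gcd ((g ^ ordg g (b ^ k) - 1) / b ^ k) b) * ordg g (b ^ k) := by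
  have hcopgb : Nat.Coprime g b := (Nat.coprime_comm.mp hbg)
  have hcop1 : Nat.Coprime g (b ^ k) := hcopgb.pow_right k
  have hcop2 : Nat.Coprime g (b ^ (k + 1)) := hcopgb.pow_right (k + 1)
  have hbk0 : 0 < b ^ k := pow_pos (by omega) k
  have hbk10 : 0 < b ^ (k + 1) := pow_pos (by omega) (k + 1)
  obtain ⟨hn0, hnmod⟩ := ordg_mem g (b ^ k) hbk0 hcop1
  obtain ⟨hN0, hNmod⟩ := ordg_mem g (b ^ (k + 1)) hbk10 hcop2
  set n := ordg g (b ^ k) with hndef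
  set N := ordg g (b ^ (k + 1)) with hNdef
  have hg1 : 1 ≤ g ^ n := Nat.one_le_pow _ _ (by omega)
  have hdvdnat : b ^ k ∣ g ^ n - 1 := (Nat.modEq_iff_dvd' hg1).mp hnmod.symm
  set h := (g ^ n - 1) / b ^ k with hhdef
  have hh : h * b ^ k = g ^ n - 1 := Nat.div_mul_cancel hdvdnat
  have hhZ : (g : ℤ) ^ n = 1 + (h : ℤ) * (b : ℤ) ^ k := by
    have : ((h * b ^ k : ℕ) : ℤ) = ((g ^ n - 1 : ℕ) : ℤ) := by exact_mod_cast hh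
    push_cast [Nat.cast_sub hg1] at this
    linarith
  set d := Nat.gcd h b with hddef
  have hd0 : 0 < d := Nat.gcd_pos_of_pos_right _ (by omega)
  have hdb : d ∣ b := Nat.gcd_dvd_right h b
  have hdh : d ∣ h := Nat.gcd_dvd_left h b
  set t := b / d with htdef
  have htd : d * t = b := Nat.mul_div_cancel' hdb
  have ht0 : 0 < t := Nat.div_pos (Nat.le_of_dvd (by omega) hdb) hd0
  have hb2k : (b : ℤ) ^ (k + 1) ∣ (b : ℤ) ^ (2 * k) := pow_dvd_pow _ (by omega)
  -- key: for any s with b ∣ s * h, g ^ (s * n) ≡ 1 [MOD b ^ (k+1)]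
  have key : ∀ s : ℕ, b ∣ s * h → (b : ℤ) ^ (k + 1) ∣ (g : ℤ) ^ (s * n) - 1 := by
    intro s hs
    obtain ⟨c, hc⟩ := binom_aux ((h : ℤ) * (b : ℤ) ^ k) s
    have h1 : (g : ℤ) ^ (s * n) = (1 + (h : ℤ) * (b : ℤ) ^ k) ^ s := by
      rw [mul_comm s n, pow_mul, hhZ]
    rw [h1, hc]
    have h2 : (b : ℤ) ^ (k + 1) ∣ (s : ℤ) * ((h : ℤ) * (b : ℤ) ^ k) := by
      obtain ⟨u, hu⟩ := hs
      refine ⟨u, ?_⟩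
      have huZ : (s : ℤ) * (h : ℤ) = (b : ℤ) * (u : ℤ) := by exact_mod_cast hu
      calc (s : ℤ) * ((h : ℤ) * (b : ℤ) ^ k) = ((s : ℤ) * (h : ℤ)) * (b : ℤ) ^ k := by ring
        _ = (b : ℤ) * (u : ℤ) * (b : ℤ) ^ k := by rw [huZ]
        _ = (b : ℤ) ^ (k + 1) * u := by ring
    have h3 : (b : ℤ) ^ (k + 1) ∣ c * ((h : ℤ) * (b : ℤ) ^ k) ^ 2 := by
      refine dvd_trans hb2k ?_
      have : ((h : ℤ) * (b : ℤ) ^ k) ^ 2 = (h : ℤ) ^ 2 * (b : ℤ) ^ (2 * k) := by ring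
      rw [this]
      exact Dvd.dvd.mul_left (Dvd.dvd.mul_left dvd_rfl _) c
    have := dvd_add h2 h3
    calc (b:ℤ)^(k+1) ∣ (s : ℤ) * ((h : ℤ) * (b : ℤ) ^ k) + c * ((h : ℤ) * (b : ℤ) ^ k) ^ 2 := this
      _ = 1 + (s : ℤ) * ((h : ℤ) * (b : ℤ) ^ k) + c * ((h : ℤ) * (b : ℤ) ^ k) ^ 2 - 1 := by ring
  -- forward direction: N ∣ t * n
  have hbdvdth : b ∣ t * h := by
    obtain ⟨h', hh'⟩ := hdh
    exact ⟨h', by rw [← htd, hh']; ring⟩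
  have hfw : (b : ℤ) ^ (k + 1) ∣ (g : ℤ) ^ (t * n) - 1 := key t hbdvdth
  have hfwmod : g ^ (t * n) ≡ 1 [MOD b ^ (k + 1)] := by
    rw [Nat.modEq_iff_dvd]
    push_cast
    have heq : (1 : ℤ) - (g : ℤ) ^ (t * n) = -((g : ℤ) ^ (t * n) - 1) := by ring
    rw [heq]
    exact dvd_neg.mpr hfw
  have hNdvd : N ∣ t * n := ordg_dvd g (b ^ (k + 1)) (t * n) hbk10 hcop2 hfwmod
  -- backward direction: t * n ∣ N
  have hnmodN : g ^ N ≡ 1 [MOD b ^ k] :=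
    Nat.ModEq.of_dvd (pow_dvd_pow b (by omega)) hNmod
  obtain ⟨s, hs⟩ : n ∣ N := ordg_dvd g (b ^ k) N hbk0 hcop1 hnmodN
  -- show b ∣ s * h
  have hNZ : (b : ℤ) ^ (k + 1) ∣ (g : ℤ) ^ N - 1 := by
    have := (Nat.modEq_iff_dvd (n := b ^ (k + 1))).mp hNmod
    push_cast at this
    have heq : ((1 : ℤ) - (g : ℤ) ^ N) = -((g : ℤ) ^ N - 1) := by ring
    rw [heq] at this
    exact (dvd_neg.mp this)
  have hsplit : (b : ℤ) ^ (k + 1) ∣ (s : ℤ) * (h : ℤ) * (b : ℤ) ^ k := by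
    obtain ⟨c, hc⟩ := binom_aux ((h : ℤ) * (b : ℤ) ^ k) s
    have h1 : (g : ℤ) ^ N = (1 + (h : ℤ) * (b : ℤ) ^ k) ^ s := by
      rw [hs, pow_mul, hhZ]
    rw [h1, hc] at hNZ
    have h3 : (b : ℤ) ^ (k + 1) ∣ c * ((h : ℤ) * (b : ℤ) ^ k) ^ 2 := by
      refine dvd_trans hb2k ?_
      have heq : ((h : ℤ) * (b : ℤ) ^ k) ^ 2 = (h : ℤ) ^ 2 * (b : ℤ) ^ (2 * k) := by ring
      rw [heq]
      exact Dvd.dvd.mul_left (Dvd.dvd.mul_left dvd_rfl _) c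
    have h4 := dvd_sub hNZ h3
    have heq : 1 + (s : ℤ) * ((h : ℤ) * (b : ℤ) ^ k) + c * ((h : ℤ) * (b : ℤ) ^ k) ^ 2 - 1
        - c * ((h : ℤ) * (b : ℤ) ^ k) ^ 2 = (s : ℤ) * (h : ℤ) * (b : ℤ) ^ k := by ring
    rwa [heq] at h4
  have hbsh : b ∣ s * h := by
    have hcancel : (b : ℤ) ∣ (s : ℤ) * (h : ℤ) := by
      have hbkne : ((b : ℤ) ^ k) ≠ 0 := pow_ne_zero k (by exact_mod_cast (by omega : (b : ℕ) ≠ 0))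
      have : (b : ℤ) * (b : ℤ) ^ k ∣ ((s : ℤ) * (h : ℤ)) * (b : ℤ) ^ k := by
        rw [← pow_succ']
        exact hsplit
      exact (mul_dvd_mul_iff_right hbkne).mp this
    exact_mod_cast hcancel
  have hts : t ∣ s := by
    have hcopr : Nat.Coprime t (h / d) := by
      have := Nat.coprime_div_gcd_div_gcd (m := h) (n := b) hd0
      exact (Nat.coprime_comm.mp this)
    have hdvd2 : t ∣ s * (h / d) := by
      obtain ⟨h', hh'⟩ := hdh
      have hh'd : h / d = h' := by rw [hh', Nat.mul_div_cancel_left _ hd0]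
      have : d * t ∣ s * (d * h') := by rw [htd, ← hh']; exact hbsh
      rw [hh'd]
      have h5 : d * t ∣ d * (s * h') := by
        have heq : s * (d * h') = d * (s * h') := by ring
        rwa [heq] at this
      exact (mul_dvd_mul_iff_left (by omega : d ≠ 0)).mp h5
    exact (Nat.Coprime.dvd_of_dvd_mul_right hcopr hdvd2)
  have hback : t * n ∣ N := by
    rw [hs]
    obtain ⟨u, hu⟩ := hts
    exact ⟨u, by rw [hu]; ring⟩
  exact Nat.dvd_antisymm hNdvd hback
end

section
/- Let g ≥ 2 and b > 1 be integers with gcd(b,g) = 1. There exists a positive integer c such that for all positive integers t, ord_g(b^{c+t}) = b^t·ord_g(b^c). -/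
namespace StableLevel

lemma ordg_mem (g m : ℕ) (hm : 0 < m) (hcop : Nat.Coprime g m) :
    0 < ordg g m ∧ g ^ ordg g m ≡ 1 [MOD m] := by
  have h : m.totient ∈ {n : ℕ | 0 < n ∧ g ^ n ≡ 1 [MOD m]} :=
    ⟨Nat.totient_pos.mpr hm, Nat.ModEq.pow_totient hcop⟩
  exact Nat.sInf_mem ⟨m.totient, h⟩

lemma ordg_dvd_iff (g m k : ℕ) (hm : 0 < m) (hcop : Nat.Coprime g m) :
    ordg g m ∣ k ↔ g ^ k ≡ 1 [MOD m] := by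
  obtain ⟨hpos, hmod⟩ := ordg_mem g m hm hcop
  constructor
  · rintro ⟨q, rfl⟩
    rw [pow_mul]
    calc (g ^ ordg g m) ^ q ≡ 1 ^ q [MOD m] := hmod.pow q
      _ = 1 := one_pow q
  · intro hk
    set o := ordg g m with ho
    have hk' : k = o * (k / o) + k % o := (Nat.div_add_mod k o).symm
    have hmod2 : g ^ (k % o) ≡ 1 [MOD m] := by
      calc g ^ (k % o) ≡ g ^ (k % o) * (g ^ o) ^ (k / o) [MOD m] := by
            nth_rewrite 1 [← mul_one (g ^ (k % o))]
            exact (Nat.ModEq.refl _).mul (by simpa using (hmod.pow (k / o)).symm)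
        _ = g ^ k := by rw [← pow_mul, ← pow_add]; congr 1; omega
        _ ≡ 1 [MOD m] := hk
    by_contra hndvd
    have hr : 0 < k % o := Nat.pos_of_ne_zero fun h => hndvd (Nat.dvd_of_mod_eq_zero h)
    have : o ≤ k % o := Nat.sInf_le ⟨hr, hmod2⟩
    have : k % o < o := Nat.mod_lt k hpos
    omega

private lemma exists_binom (Y : ℤ) (n : ℕ) : ∃ T : ℤ, (1 + Y) ^ n = 1 + n * Y + Y ^ 2 * T := by
  induction n with
  | zero => exact ⟨0, by ring⟩
  | succ k ih =>
    obtain ⟨T, hT⟩ := ih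
    refine ⟨k + T + T * Y, ?_⟩
    rw [pow_succ, hT]
    push_cast
    ring

/-- one-step lifting-the-exponent -/
lemma lte_step (p x : ℕ) (hp : p.Prime) (hx : 2 ≤ x) (h : p ^ 2 ∣ x - 1) :
    (x ^ p - 1).factorization p = (x - 1).factorization p + 1 := by
  set y := x - 1 with hy
  have hy0 : y ≠ 0 := by omega
  set w := y.factorization p with hwdef
  have hw2 : 2 ≤ w := (hp.pow_dvd_iff_le_factorization hy0).mp h
  have hpw : p ^ w ∣ y := Nat.ordProj_dvd y p
  have hnot : ¬ p ^ (w + 1) ∣ y := Nat.pow_succ_factorization_not_dvd hy0 hp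
  obtain ⟨T, hT⟩ := exists_binom (y : ℤ) p
  have hxy : (x : ℤ) = 1 + (y : ℤ) := by
    have : x = 1 + y := by omega
    exact_mod_cast congrArg (Nat.cast : ℕ → ℤ) this
  have hN0 : x ^ p - 1 ≠ 0 := by
    have : 2 ≤ x ^ p := le_trans hx (Nat.le_self_pow hp.pos.ne' x)
    omega
  have hcast : ((x ^ p - 1 : ℕ) : ℤ) = (p : ℤ) * y + (y : ℤ) ^ 2 * T := by
    have h1 : (1 : ℕ) ≤ x ^ p := by omega
    push_cast [Nat.cast_sub h1]
    rw [hxy, hT]; ring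
  have hpwZ : (p : ℤ) ^ w ∣ (y : ℤ) := by exact_mod_cast hpw
  have hdvd1 : (p : ℤ) ^ (w + 1) ∣ ((x ^ p - 1 : ℕ) : ℤ) := by
    rw [hcast]
    apply dvd_add
    · rw [pow_succ']
      exact mul_dvd_mul dvd_rfl hpwZ
    · apply dvd_mul_of_dvd_left
      calc (p : ℤ) ^ (w + 1) ∣ (p : ℤ) ^ (2 * w) := pow_dvd_pow _ (by omega)
        _ = ((p : ℤ) ^ w) ^ 2 := by rw [← pow_mul, mul_comm]
        _ ∣ (y : ℤ) ^ 2 := pow_dvd_pow_of_dvd hpwZ 2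
  have hdvd1n : p ^ (w + 1) ∣ x ^ p - 1 := by
    have := hdvd1
    rwa [show ((p : ℤ) ^ (w + 1)) = ((p ^ (w + 1) : ℕ) : ℤ) by push_cast; ring,
      Int.natCast_dvd_natCast] at this
  have hndvd : ¬ p ^ (w + 2) ∣ x ^ p - 1 := by
    intro hcon
    have hconZ : (p : ℤ) ^ (w + 2) ∣ ((x ^ p - 1 : ℕ) : ℤ) := by
      rw [show ((p : ℤ) ^ (w + 2)) = ((p ^ (w + 2) : ℕ) : ℤ) by push_cast; ring]
      exact Int.natCast_dvd_natCast.mpr hcon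
    have hsq : (p : ℤ) ^ (w + 2) ∣ (y : ℤ) ^ 2 * T := by
      apply dvd_mul_of_dvd_left
      calc (p : ℤ) ^ (w + 2) ∣ (p : ℤ) ^ (2 * w) := pow_dvd_pow _ (by omega)
        _ = ((p : ℤ) ^ w) ^ 2 := by rw [← pow_mul, mul_comm]
        _ ∣ (y : ℤ) ^ 2 := pow_dvd_pow_of_dvd hpwZ 2
    have hpy : (p : ℤ) ^ (w + 2) ∣ (p : ℤ) * y := by
      have := dvd_sub hconZ hsq
      rwa [hcast, add_sub_cancel_right] at this
    have hcancel : (p : ℤ) ^ (w + 1) ∣ (y : ℤ) := by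
      have hp0 : (p : ℤ) ≠ 0 := by exact_mod_cast hp.pos.ne'
      rw [pow_succ'] at hpy
      exact (mul_dvd_mul_iff_left hp0).mp hpy
    have : p ^ (w + 1) ∣ y := by
      rw [show ((p : ℤ) ^ (w + 1)) = ((p ^ (w + 1) : ℕ) : ℤ) by push_cast; ring] at hcancel
      exact_mod_cast hcancel
    exact hnot this
  have h1 : w + 1 ≤ (x ^ p - 1).factorization p :=
    (hp.pow_dvd_iff_le_factorization hN0).mp hdvd1n
  have h2 : ¬ (w + 2 ≤ (x ^ p - 1).factorization p) := fun hc =>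
    hndvd ((hp.pow_dvd_iff_le_factorization hN0).mpr hc)
  omega

lemma lte_pow (p x : ℕ) (hp : p.Prime) (hx : 2 ≤ x) (h : p ^ 2 ∣ x - 1) (a : ℕ) :
    (x ^ p ^ a - 1).factorization p = (x - 1).factorization p + a := by
  induction a with
  | zero => simp
  | succ a ih =>
    have hy0 : x - 1 ≠ 0 := by omega
    have hw2 : 2 ≤ (x - 1).factorization p := (hp.pow_dvd_iff_le_factorization hy0).mp h
    have hx' : 2 ≤ x ^ p ^ a := le_trans hx (Nat.le_self_pow (pow_ne_zero a hp.pos.ne') x)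
    have hx'0 : x ^ p ^ a - 1 ≠ 0 := by omega
    have h' : p ^ 2 ∣ x ^ p ^ a - 1 := by
      apply (hp.pow_dvd_iff_le_factorization hx'0).mpr
      rw [ih]; omega
    have := lte_step p (x ^ p ^ a) hp hx' h'
    rw [← pow_mul, ← pow_succ] at this
    rw [this, ih]; omega

lemma lte_coprime (p x u : ℕ) (hp : p.Prime) (hx : 2 ≤ x) (hpd : p ∣ x - 1)
    (hu : 0 < u) (hpu : ¬ p ∣ u) :
    (x ^ u - 1).factorization p = (x - 1).factorization p := by
  have := Fact.mk hp
  set S := ∑ j ∈ Finset.range u, x ^ j with hS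
  have hid : x ^ u - 1 = (x - 1) * S := by
    have h1 : (1 : ℕ) ≤ x := by omega
    have h1u : (1 : ℕ) ≤ x ^ u := Nat.one_le_pow _ _ (by omega)
    have : ((x ^ u - 1 : ℕ) : ℤ) = (((x - 1) * S : ℕ) : ℤ) := by
      rw [hS]
      push_cast [Nat.cast_sub h1, Nat.cast_sub h1u]
      rw [mul_comm]
      exact (geom_sum_mul (x : ℤ) u).symm
    exact_mod_cast this
  have hxmod : (x : ZMod p) = 1 := by
    have : ((x - 1 : ℕ) : ZMod p) = 0 := (ZMod.natCast_eq_zero_iff _ _).mpr hpd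
    have hx1 : x = (x - 1) + 1 := by omega
    rw [hx1]; push_cast [this]; ring
  have hSmod : ((S : ℕ) : ZMod p) = (u : ZMod p) := by
    rw [hS]; push_cast
    simp [hxmod]
  have hpS : ¬ p ∣ S := by
    intro hcon
    have : ((S : ℕ) : ZMod p) = 0 := (ZMod.natCast_eq_zero_iff _ _).mpr hcon
    rw [hSmod] at this
    exact hpu ((ZMod.natCast_eq_zero_iff _ _).mp this)
  have hS0 : S ≠ 0 := fun hc => hpS (hc ▸ dvd_zero p)
  have hy0 : x - 1 ≠ 0 := by omega
  rw [hid, Nat.factorization_mul hy0 hS0]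
  simp [Nat.factorization_eq_zero_of_not_dvd hpS]

/-- Lifting the exponent, uniform version: if `p^2 ∣ x - 1` then
`v_p(x^μ - 1) = v_p(x-1) + v_p(μ)`. -/
lemma lte (p x μ : ℕ) (hp : p.Prime) (hx : 2 ≤ x) (h : p ^ 2 ∣ x - 1) (hμ : 0 < μ) :
    (x ^ μ - 1).factorization p = (x - 1).factorization p + μ.factorization p := by
  set a := μ.factorization p with ha
  set u := μ / p ^ a with hu
  have hμu : p ^ a * u = μ := Nat.ordProj_mul_ordCompl_eq_self μ p
  have hpu : ¬ p ∣ u := Nat.not_dvd_ordCompl hp hμ.ne'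
  have hu0 : 0 < u := Nat.ordCompl_pos p hμ.ne'
  have hx' : 2 ≤ x ^ p ^ a := le_trans hx (Nat.le_self_pow (pow_ne_zero a hp.pos.ne') x)
  have hy0 : x - 1 ≠ 0 := by omega
  have hw2 : 2 ≤ (x - 1).factorization p := (hp.pow_dvd_iff_le_factorization hy0).mp h
  have hkey : (x ^ p ^ a - 1).factorization p = (x - 1).factorization p + a :=
    lte_pow p x hp hx h a
  have hx'0 : x ^ p ^ a - 1 ≠ 0 := by
    have : 2 ≤ x ^ p ^ a := hx'
    omega
  have hpd : p ∣ x ^ p ^ a - 1 := by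
    have h1 : p ^ 1 ∣ x ^ p ^ a - 1 := by
      apply (hp.pow_dvd_iff_le_factorization hx'0).mpr
      rw [hkey]; omega
    simpa using h1
  calc (x ^ μ - 1).factorization p = ((x ^ p ^ a) ^ u - 1).factorization p := by
        rw [← pow_mul, hμu]
    _ = (x ^ p ^ a - 1).factorization p := lte_coprime p _ u hp hx' hpd hu0 hpu
    _ = (x - 1).factorization p + a := hkey

end StableLevel

/-- For `g ≥ 2`, `b > 1` with `gcd(b,g) = 1`, there exists a positive
integer `c` such that `ord_g(b^{c+t}) = b^t·ord_g(b^c)` for all positive integers `t`. -/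
theorem exists_stable_level (g b : ℕ) (hg : 2 ≤ g) (hb : 1 < b) (hbg : Nat.gcd b g = 1) :
    ∃ c : ℕ, 0 < c ∧ ∀ t : ℕ, 0 < t → ordg g (b ^ (c + t)) = b ^ t * ordg g (b ^ c) := by
  have hcop : Nat.Coprime g b := Nat.Coprime.symm hbg
  have hbpos : 0 < b := by omega
  set A : ℕ → ℕ := fun n => ordg g (b ^ n) with hA
  have hApos : ∀ n, 0 < A n := fun n =>
    (StableLevel.ordg_mem g (b ^ n) (pow_pos hbpos n) (hcop.pow_right n)).1
  have hAmod : ∀ n, g ^ A n ≡ 1 [MOD b ^ n] := fun n =>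
    (StableLevel.ordg_mem g (b ^ n) (pow_pos hbpos n) (hcop.pow_right n)).2
  have hdvd : ∀ n k, A n ∣ k ↔ g ^ k ≡ 1 [MOD b ^ n] := fun n k =>
    StableLevel.ordg_dvd_iff g (b ^ n) k (pow_pos hbpos n) (hcop.pow_right n)
  have hG2 : ∀ k, 0 < k → 2 ≤ g ^ k := fun k hk => le_trans hg (Nat.le_self_pow hk.ne' g)
  have hG0 : ∀ n, g ^ A n - 1 ≠ 0 := fun n => by have := hG2 (A n) (hApos n); omega
  have hbG : ∀ n, b ^ n ∣ g ^ A n - 1 := fun n =>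
    (Nat.modEq_iff_dvd' (by have := hG2 (A n) (hApos n); omega)).mp (hAmod n).symm
  set e : ℕ → ℕ := fun p => b.factorization p with he
  set W : ℕ → ℕ → ℕ := fun p n => (g ^ A n - 1).factorization p with hW
  have hWlow : ∀ p ∈ b.primeFactors, ∀ n, e p * n ≤ W p n := by
    intro p hp n
    obtain ⟨pp, pdvd, -⟩ := Nat.mem_primeFactors.mp hp
    simp only [hW, he]
    apply (pp.pow_dvd_iff_le_factorization (hG0 n)).mp
    calc p ^ (b.factorization p * n) = (p ^ b.factorization p) ^ n := by rw [pow_mul]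
      _ ∣ b ^ n := pow_dvd_pow_of_dvd (Nat.ordProj_dvd b p) n
      _ ∣ g ^ A n - 1 := hbG n
  have hAmono : ∀ n m, n ≤ m → A n ∣ A m := by
    intro n m h
    exact (hdvd n (A m)).mpr (Nat.ModEq.of_dvd (pow_dvd_pow b h) (hAmod m))
  have hp2dvd : ∀ p ∈ b.primeFactors, ∀ n, 2 ≤ n → p ^ 2 ∣ g ^ A n - 1 := by
    intro p hp n hn
    obtain ⟨pp, pdvd, -⟩ := Nat.mem_primeFactors.mp hp
    calc p ^ 2 ∣ b ^ 2 := pow_dvd_pow_of_dvd pdvd 2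
      _ ∣ b ^ n := pow_dvd_pow b hn
      _ ∣ g ^ A n - 1 := hbG n
  -- key divisibility helper
  have hH : ∀ n μ, 2 ≤ n → 0 < μ →
      (∀ p ∈ b.primeFactors, e p * (n + 1) ≤ W p n + μ.factorization p) →
      A (n + 1) ∣ A n * μ := by
    intro n μ hn hμ hcond
    apply (hdvd (n + 1) _).mpr
    have hpos : 0 < A n * μ := Nat.mul_pos (hApos n) hμ
    have hN2 : 2 ≤ g ^ (A n * μ) := hG2 _ hpos
    have hN0 : g ^ (A n * μ) - 1 ≠ 0 := by omega
    have hdiv : b ^ (n + 1) ∣ g ^ (A n * μ) - 1 := by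
      apply (Nat.factorization_le_iff_dvd (pow_ne_zero _ (by omega)) hN0).mp
      rw [Finsupp.le_def]
      intro p
      rw [Nat.factorization_pow, Finsupp.smul_apply, smul_eq_mul]
      by_cases hp : p ∈ b.primeFactors
      · obtain ⟨pp, pdvd, -⟩ := Nat.mem_primeFactors.mp hp
        have hlte : (g ^ (A n * μ) - 1).factorization p
            = (g ^ A n - 1).factorization p + μ.factorization p := by
          rw [pow_mul]
          exact StableLevel.lte p (g ^ A n) μ pp (hG2 _ (hApos n)) (hp2dvd p hp n hn) hμ
        have hc := hcond p hp
        simp only [hW, he] at hc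
        rw [hlte]
        have hcomm : (n + 1) * b.factorization p = b.factorization p * (n + 1) := by ring
        omega
      · have h0 : b.factorization p = 0 := by
          rw [← Finsupp.notMem_support_iff, Nat.support_factorization]
          exact hp
        rw [h0]
        simp
    exact ((Nat.modEq_iff_dvd' (by omega)).mpr hdiv).symm
  -- upper bound on W by induction
  have hWup : ∀ p ∈ b.primeFactors, ∀ n, 2 ≤ n → W p n ≤ max (W p 2) (e p * n) := by
    intro p hp n hn
    induction n, hn using Nat.le_induction with
    | base => simp
    | succ n hn ih =>
      obtain ⟨pp, pdvd, hb0⟩ := Nat.mem_primeFactors.mp hp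
      have hbne : b ^ (n + 1) ≠ 0 := pow_ne_zero _ (by omega)
      set μ := b ^ (n + 1) / Nat.gcd (b ^ (n + 1)) (g ^ A n - 1) with hμ
      have hgcd_dvd : Nat.gcd (b ^ (n + 1)) (g ^ A n - 1) ∣ b ^ (n + 1) :=
        Nat.gcd_dvd_left _ _
      have hμpos : 0 < μ := by
        apply Nat.div_pos (Nat.le_of_dvd (Nat.pos_of_ne_zero hbne) hgcd_dvd)
        exact Nat.gcd_pos_of_pos_left _ (Nat.pos_of_ne_zero hbne)
      have hμfact : ∀ q ∈ b.primeFactors, μ.factorization q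
          = (n + 1) * e q - min ((n + 1) * e q) (W q n) := by
        intro q hq
        rw [hμ, Nat.factorization_div hgcd_dvd, Nat.factorization_gcd hbne (hG0 n)]
        simp only [Finsupp.tsub_apply, Finsupp.inf_apply, Nat.factorization_pow,
          Finsupp.smul_apply, smul_eq_mul, hW, he]
      have hstep : A (n + 1) ∣ A n * μ := by
        apply hH n μ hn hμpos
        intro q hq
        rw [hμfact q hq]
        have h1 := hWlow q hq n
        have h2 : e q * (n + 1) = e q * n + e q := by ring
        have h3 : (n + 1) * e q = e q * (n + 1) := by ring
        omega
      have hN2 : 2 ≤ g ^ (A n * μ) := hG2 _ (Nat.mul_pos (hApos n) hμpos)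
      have hN0 : g ^ (A n * μ) - 1 ≠ 0 := by omega
      have hdvdpow : g ^ A (n + 1) - 1 ∣ g ^ (A n * μ) - 1 := by
        obtain ⟨k, hk⟩ := hstep
        rw [hk, pow_mul]
        simpa using Nat.sub_dvd_pow_sub_pow (g ^ A (n + 1)) 1 k
      have hWn1 : W p (n + 1) ≤ (g ^ (A n * μ) - 1).factorization p := by
        simp only [hW]
        apply (pp.pow_dvd_iff_le_factorization hN0).mp
        exact dvd_trans (Nat.ordProj_dvd _ p) hdvdpow
      have hlte : (g ^ (A n * μ) - 1).factorization p
          = W p n + μ.factorization p := by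
        simp only [hW]
        rw [pow_mul]
        exact StableLevel.lte p (g ^ A n) μ pp (hG2 _ (hApos n)) (hp2dvd p hp n hn) hμpos
      have hμp := hμfact p hp
      have h2 : e p * (n + 1) = e p * n + e p := by ring
      have h3 : (n + 1) * e p = e p * (n + 1) := by ring
      omega
  -- choice of c
  have hepos : ∀ p ∈ b.primeFactors, 1 ≤ e p := by
    intro p hp
    obtain ⟨pp, pdvd, -⟩ := Nat.mem_primeFactors.mp hp
    simp only [he]
    exact pp.factorization_pos_of_dvd (by omega) pdvd
  set K := g ^ A 2 - 1 with hK
  set c := K + 2 with hc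
  have hW2le : ∀ p ∈ b.primeFactors, W p 2 ≤ K := by
    intro p hp
    obtain ⟨pp, -, -⟩ := Nat.mem_primeFactors.mp hp
    have h1 : p ^ W p 2 ∣ K := by
      simp only [hW, hK]
      exact Nat.ordProj_dvd _ _
    have h2 : p ^ W p 2 ≤ K := Nat.le_of_dvd (by have := hG2 (A 2) (hApos 2); omega) h1
    have h3 : W p 2 < 2 ^ W p 2 := Nat.lt_two_pow_self
    have h4 : 2 ^ W p 2 ≤ p ^ W p 2 := Nat.pow_le_pow_left pp.two_le _
    omega
  have hWexact : ∀ n, c ≤ n → ∀ p ∈ b.primeFactors, W p n = e p * n := by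
    intro n hn p hp
    have hup := hWup p hp n (by omega)
    have hlow := hWlow p hp n
    have h2 := hW2le p hp
    have he1 := hepos p hp
    have h3 : n ≤ e p * n := Nat.le_mul_of_pos_left n (by omega)
    omega
  -- the exact step
  have hstepeq : ∀ n, c ≤ n → A (n + 1) = b * A n := by
    intro n hn
    have hn2 : 2 ≤ n := by omega
    have hup : A (n + 1) ∣ A n * b := by
      apply hH n b hn2 (by omega)
      intro q hq
      have h1 := hWlow q hq n
      have heq : b.factorization q = e q := by simp only [he]
      have h2 : e q * (n + 1) = e q * n + e q := by ring
      omega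
    have hmono := hAmono n (n + 1) (by omega)
    set m := A (n + 1) / A n with hm
    have hmm : A n * m = A (n + 1) := Nat.mul_div_cancel' hmono
    have hm0 : 0 < m := by
      rcases Nat.eq_zero_or_pos m with h0 | h
      · rw [h0, mul_zero] at hmm; have := hApos (n + 1); omega
      · exact h
    have hbdvdm : b ∣ m := by
      apply (Nat.factorization_le_iff_dvd (by omega : b ≠ 0) hm0.ne').mp
      rw [Finsupp.le_iff]
      intro p hps
      rw [Nat.support_factorization] at hps
      obtain ⟨pp, pdvd, -⟩ := Nat.mem_primeFactors.mp hps
      have hWn := hWexact n hn p hps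
      have hWn1 : e p * (n + 1) ≤ W p (n + 1) := hWlow p hps (n + 1)
      have hlte : W p (n + 1) = W p n + m.factorization p := by
        simp only [hW]
        rw [← hmm, pow_mul]
        exact StableLevel.lte p (g ^ A n) m pp (hG2 _ (hApos n)) (hp2dvd p hps n hn2) hm0
      have heq : b.factorization p = e p := by simp only [he]
      have h2 : e p * (n + 1) = e p * n + e p := by ring
      omega
    have hlower : b * A n ∣ A (n + 1) := by
      rw [← hmm, mul_comm b (A n)]
      exact mul_dvd_mul_left (A n) hbdvdm
    exact Nat.dvd_antisymm (by rwa [mul_comm (A n) b] at hup) hlower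
  refine ⟨c, by omega, ?_⟩
  have main : ∀ t, A (c + t) = b ^ t * A c := by
    intro t
    induction t with
    | zero => simp
    | succ t ih =>
      have hs : A (c + t + 1) = b * A (c + t) := hstepeq (c + t) (by omega)
      have : c + (t + 1) = c + t + 1 := by ring
      rw [this, hs, ih, pow_succ]
      ring
  intro t ht
  simpa only [hA] using main t
end

section
/- Let g ≥ 2 and b > 1 be integers with gcd(b,g) = 1, let a be a positive integer with gcd(a,b) = 1 and a < b^k, let t ≥ 1, and let k ≥ c_g(b). Then for every i with 0 ≤ i < ord_g(b^k) and every m ∈ {0,…,b^t−1} there is a unique n ∈ {0,…,b^t−1} such that (a·g^{i + m·ord_g(b^k)}) mod b^{k+t} = ((a·g^i) mod b^k) + n·b^k; moreover, for each fixed i, the resulting map m ↦ n is a bijection of {0,…,b^t−1} onto itself. -/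
/-- `cg g b` is the least `c ≥ 1` such that `ord_g(b^{c+t}) = b^t·ord_g(b^c)` for all `t ≥ 1`. -/
noncomputable def cg (g b : ℕ) : ℕ :=
  sInf {c : ℕ | 0 < c ∧ ∀ t : ℕ, 0 < t → ordg g (b ^ (c + t)) = b ^ t * ordg g (b ^ c)}

namespace RTL


lemma ordg_mem {g M : ℕ} (hM : 0 < M) (h : Nat.Coprime g M) :
    0 < ordg g M ∧ g ^ ordg g M ≡ 1 [MOD M] := by
  have hne : {n : ℕ | 0 < n ∧ g ^ n ≡ 1 [MOD M]}.Nonempty :=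
    ⟨Nat.totient M, Nat.totient_pos.mpr hM, Nat.ModEq.pow_totient h⟩
  exact Nat.sInf_mem hne

lemma ordg_dvd_iff {g M : ℕ} (hM : 0 < M) (h : Nat.Coprime g M) (m : ℕ) :
    g ^ m ≡ 1 [MOD M] ↔ ordg g M ∣ m := by
  obtain ⟨hd, hgd⟩ := ordg_mem hM h
  set d := ordg g M with hdef
  constructor
  · intro hm
    have key : g ^ (m % d) ≡ 1 [MOD M] := by
      have h1 : g ^ m = (g ^ d) ^ (m / d) * g ^ (m % d) := by
        rw [← pow_mul, ← pow_add, Nat.div_add_mod]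
      have h2 : (g ^ d) ^ (m / d) * g ^ (m % d) ≡ 1 ^ (m / d) * g ^ (m % d) [MOD M] :=
        (hgd.pow _).mul_right _
      calc g ^ (m % d) = 1 ^ (m / d) * g ^ (m % d) := by ring
        _ ≡ (g ^ d) ^ (m / d) * g ^ (m % d) [MOD M] := h2.symm
        _ = g ^ m := h1.symm
        _ ≡ 1 [MOD M] := hm
    by_contra hnd
    have hr : 0 < m % d := Nat.pos_of_ne_zero (fun h0 => hnd (Nat.dvd_of_mod_eq_zero h0))
    have : d ≤ m % d := Nat.sInf_le ⟨hr, key⟩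
    exact absurd (Nat.mod_lt m hd) (not_lt.mpr this)
  · rintro ⟨q, rfl⟩
    calc g ^ (d * q) = (g ^ d) ^ q := by rw [pow_mul]
      _ ≡ 1 ^ q [MOD M] := hgd.pow q
      _ = 1 := one_pow q

lemma modeq_one_iff_dvd {g M m : ℕ} (hg : 1 ≤ g) :
    g ^ m ≡ 1 [MOD M] ↔ M ∣ g ^ m - 1 := by
  rw [← Nat.modEq_iff_dvd' (Nat.one_le_pow m g hg)]
  exact ⟨fun h => h.symm, fun h => h.symm⟩

lemma geom_nat (x s : ℕ) (hx : 1 ≤ x) :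
    x ^ s - 1 = (x - 1) * ∑ i ∈ Finset.range s, x ^ i := by
  have h := geom_sum_mul (x : ℤ) s
  have h1 : (1:ℤ) ≤ (x:ℤ) ^ s := by exact_mod_cast Nat.one_le_pow s x hx
  zify [Nat.one_le_pow s x hx, hx]
  push_cast
  linarith [geom_sum_mul (x : ℤ) s]

lemma pow_one_add (y n : ℕ) : (1 + y) ^ n ≡ 1 + n * y [MOD y ^ 2] := by
  induction n with
  | zero => simp [Nat.ModEq.refl]
  | succ n ih =>
    have h1 : (1 + y) ^ (n + 1) = (1 + y) ^ n * (1 + y) := pow_succ _ _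
    have h2 : (1 + y) ^ n * (1 + y) ≡ (1 + n * y) * (1 + y) [MOD y ^ 2] := ih.mul_right _
    have h3 : (1 + n * y) * (1 + y) = (1 + (n + 1) * y) + n * y ^ 2 := by ring
    have h4 : (1 + (n + 1) * y) + n * y ^ 2 ≡ (1 + (n + 1) * y) + 0 [MOD y ^ 2] :=
      Nat.ModEq.add_left _ ((Nat.modEq_zero_iff_dvd).mpr ⟨n, by ring⟩)
    calc (1 + y) ^ (n + 1) ≡ (1 + n * y) * (1 + y) [MOD y ^ 2] := by rw [h1]; exact h2
      _ ≡ 1 + (n + 1) * y [MOD y ^ 2] := by rw [h3]; simpa using h4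

lemma sum_geom_mod (y j : ℕ) :
    (∑ i ∈ Finset.range j, (1 + y) ^ i) ≡ j + (∑ i ∈ Finset.range j, i) * y [MOD y ^ 2] := by
  induction j with
  | zero => simp [Nat.ModEq.refl]
  | succ n ih =>
    rw [Finset.sum_range_succ, Finset.sum_range_succ]
    have h2 : (∑ i ∈ Finset.range n, (1 + y) ^ i) + (1 + y) ^ n ≡
        (n + (∑ i ∈ Finset.range n, i) * y) + (1 + n * y) [MOD y ^ 2] :=
      ih.add (pow_one_add y n)
    calc (∑ i ∈ Finset.range n, (1 + y) ^ i) + (1 + y) ^ n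
        ≡ (n + (∑ i ∈ Finset.range n, i) * y) + (1 + n * y) [MOD y ^ 2] := h2
      _ = (n + 1) + ((∑ i ∈ Finset.range n, i) + n) * y := by ring

lemma S_val {p y : ℕ} (hp : p.Prime) (hpy : p ∣ y) (h4 : p = 2 → 4 ∣ y) :
    (∑ i ∈ Finset.range p, (1 + y) ^ i).factorization p = 1 := by
  set S := ∑ i ∈ Finset.range p, (1 + y) ^ i with hS
  set T := ∑ i ∈ Finset.range p, i with hT
  have hmod : S ≡ p + T * y [MOD p ^ 2] := by
    refine Nat.ModEq.of_dvd ?_ (sum_geom_mod y p)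
    exact pow_dvd_pow_of_dvd hpy 2
  have hdvd : p ^ 2 ∣ T * y := by
    rcases eq_or_ne p 2 with h2 | hodd
    · subst h2
      have : T = 1 := by rw [hT]; decide
      rw [this, one_mul, show (2:ℕ)^2 = 4 from rfl]
      exact h4 rfl
    · have hT2 : T * 2 = p * (p - 1) := Finset.sum_range_id_mul_two p
      have hpT : p ∣ T := by
        have h1 : p ∣ T * 2 := hT2 ▸ Dvd.intro _ rfl
        exact (Nat.Coprime.dvd_of_dvd_mul_right
          (Nat.coprime_two_right.mpr (hp.odd_of_ne_two hodd)) h1)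
      calc p ^ 2 = p * p := sq p
        _ ∣ T * y := mul_dvd_mul hpT hpy
  have hmod2 : S ≡ p [MOD p ^ 2] := by
    calc S ≡ p + T * y [MOD p ^ 2] := hmod
      _ ≡ p + 0 [MOD p ^ 2] := Nat.ModEq.add_left _ ((Nat.modEq_zero_iff_dvd).mpr hdvd)
      _ = p := by ring
  have hpS : p ∣ S := by
    have : S ≡ p [MOD p] := Nat.ModEq.of_dvd ⟨p, (sq p)⟩ hmod2
    have := this.trans ((Nat.modEq_zero_iff_dvd).mpr dvd_rfl)
    exact (Nat.modEq_zero_iff_dvd).mp this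
  have hp2S : ¬ p ^ 2 ∣ S := by
    intro hc
    have h1 : (0:ℕ) ≡ p [MOD p ^ 2] := ((Nat.modEq_zero_iff_dvd).mpr hc).symm.trans hmod2
    have h2 : p ^ 2 ∣ p := (Nat.modEq_zero_iff_dvd).mp h1.symm
    have := Nat.le_of_dvd hp.pos h2
    nlinarith [hp.two_le]
  obtain ⟨u, hu⟩ := hpS
  have hu0 : u ≠ 0 := by
    rintro rfl
    rw [mul_zero] at hu
    have hpos : 0 < S := by
      rw [hS]
      exact Finset.sum_pos (fun i _ => by positivity) ⟨0, Finset.mem_range.mpr hp.pos⟩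
    omega
  have hpu : ¬ p ∣ u := by
    intro hc
    exact hp2S (by rw [hu, sq]; exact mul_dvd_mul_left p hc)
  rw [hu, Nat.factorization_mul hp.pos.ne' hu0]
  simp [hp.factorization, Nat.factorization_eq_zero_of_not_dvd hpu]

lemma stepA {p x : ℕ} (hp : p.Prime) (hx : 2 ≤ x) (hpx : p ∣ x - 1) (h4 : p = 2 → 4 ∣ x - 1) :
    (x ^ p - 1).factorization p = (x - 1).factorization p + 1 := by
  have hx1 : x = 1 + (x - 1) := by omega
  have hgeo := geom_nat x p (by omega)
  set S := ∑ i ∈ Finset.range p, x ^ i with hSdef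
  have hS : S.factorization p = 1 := by
    rw [hSdef]
    rw [show (∑ i ∈ Finset.range p, x ^ i) = ∑ i ∈ Finset.range p, (1 + (x-1)) ^ i by
      rw [← hx1]]
    exact S_val hp hpx h4
  have hS0 : S ≠ 0 := by
    have : 0 < S := Finset.sum_pos (fun i _ => by positivity) ⟨0, Finset.mem_range.mpr hp.pos⟩
    omega
  rw [hgeo, Nat.factorization_mul (by omega) hS0]
  simp [hS]

lemma sum_mod_p {p x : ℕ} (hpx : p ∣ x - 1) (hx : 1 ≤ x) (j : ℕ) :
    (∑ i ∈ Finset.range j, x ^ i) ≡ j [MOD p] := by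
  have hx1 : x ≡ 1 [MOD p] := ((Nat.modEq_iff_dvd' hx).mpr hpx).symm
  induction j with
  | zero => simp [Nat.ModEq.refl]
  | succ n ih =>
    rw [Finset.sum_range_succ]
    calc (∑ i ∈ Finset.range n, x ^ i) + x ^ n ≡ n + 1 ^ n [MOD p] := ih.add (hx1.pow n)
      _ = n + 1 := by rw [one_pow]

lemma stepB {p x s : ℕ} (hp : p.Prime) (hx : 2 ≤ x) (hpx : p ∣ x - 1) (hps : ¬ p ∣ s)
    (hs : 1 ≤ s) : (x ^ s - 1).factorization p = (x - 1).factorization p := by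
  have hgeo := geom_nat x s (by omega)
  set S := ∑ i ∈ Finset.range s, x ^ i with hSdef
  have hS0 : S ≠ 0 := by
    have : 0 < S := Finset.sum_pos (fun i _ => by positivity) ⟨0, Finset.mem_range.mpr hs⟩
    omega
  have hSfac : S.factorization p = 0 := by
    apply Nat.factorization_eq_zero_of_not_dvd
    intro hc
    apply hps
    have h1 : S ≡ s [MOD p] := sum_mod_p hpx (by omega) s
    have h2 : (0:ℕ) ≡ s [MOD p] := ((Nat.modEq_zero_iff_dvd).mpr hc).symm.trans h1
    exact (Nat.modEq_zero_iff_dvd).mp h2.symm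
  rw [hgeo, Nat.factorization_mul (by omega) hS0, Finsupp.add_apply, hSfac, add_zero]

lemma lte_lite {p : ℕ} (hp : p.Prime) : ∀ s x : ℕ, 2 ≤ x → p ∣ x - 1 → (p = 2 → 4 ∣ x - 1) →
    1 ≤ s → (x ^ s - 1).factorization p = (x - 1).factorization p + s.factorization p := by
  intro s
  induction s using Nat.strong_induction_on with
  | _ s ih =>
    intro x hx hpx h4 hs
    by_cases hps : p ∣ s
    · obtain ⟨s', rfl⟩ := hps
      have hs' : 1 ≤ s' := by
        rcases Nat.eq_zero_or_pos s' with h | h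
        · subst h; simp at hs
        · exact h
      have hlt : s' < p * s' := by
        have := hp.two_le; nlinarith
      have hxp : 2 ≤ x ^ p := by
        calc 2 ≤ x := hx
          _ ≤ x ^ p := Nat.le_self_pow hp.pos.ne' x
      have hdvd1 : x - 1 ∣ x ^ p - 1 := by
        rw [geom_nat x p (by omega)]; exact Dvd.intro _ rfl
      have hpxp : p ∣ x ^ p - 1 := hpx.trans hdvd1
      have h4p : p = 2 → 4 ∣ x ^ p - 1 := fun h2 => (h4 h2).trans hdvd1
      have hrw : x ^ (p * s') = (x ^ p) ^ s' := by rw [pow_mul]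
      rw [hrw, ih s' hlt (x ^ p) hxp hpxp h4p hs', stepA hp hx hpx h4]
      have hfac : (p * s').factorization p = 1 + s'.factorization p := by
        rw [Nat.factorization_mul hp.pos.ne' (by omega)]
        simp [hp.factorization]
      rw [hfac]; ring
    · rw [stepB hp hx hpx hps hs]
      rw [Nat.factorization_eq_zero_of_not_dvd hps, add_zero]

lemma pow_dvd_iff {b X : ℕ} (hb : 2 ≤ b) (hX : X ≠ 0) (n : ℕ) :
    b ^ n ∣ X ↔ ∀ p ∈ b.primeFactors, n * b.factorization p ≤ X.factorization p := by
  rw [← Nat.factorization_le_iff_dvd (pow_ne_zero n (by omega)) hX, Nat.factorization_pow]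
  constructor
  · intro h p hp
    have := h p
    simpa using this
  · intro h
    intro p
    by_cases hp : p ∈ b.primeFactors
    · simpa using h p hp
    · have : b.factorization p = 0 := by
        rw [← Nat.support_factorization] at hp
        exact Finsupp.notMem_support_iff.mp hp
      simp [this]

theorem key_order (g b : ℕ) (hg : 2 ≤ g) (hb : 1 < b) (hbg : Nat.gcd b g = 1) :
    (0 < cg g b) ∧ ∀ k t, cg g b ≤ k → 1 ≤ t →
      ordg g (b ^ (k + t)) = b ^ t * ordg g (b ^ k) := by
  have hgb : Nat.Coprime g b := Nat.Coprime.symm hbg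
  have hco : ∀ n : ℕ, Nat.Coprime g (b ^ n) := fun n => hgb.pow_right n
  have hbn : ∀ n : ℕ, 0 < b ^ n := fun n => pow_pos (by omega) n
  set d : ℕ → ℕ := fun n => ordg g (b ^ n) with hd
  have hdpos : ∀ n, 0 < d n := fun n => (ordg_mem (hbn n) (hco n)).1
  have hdone : ∀ n, g ^ d n ≡ 1 [MOD b ^ n] := fun n => (ordg_mem (hbn n) (hco n)).2
  have hdvd_iff : ∀ n m, g ^ m ≡ 1 [MOD b ^ n] ↔ d n ∣ m :=
    fun n m => ordg_dvd_iff (hbn n) (hco n) m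
  have hmono : ∀ n n', n ≤ n' → d n ∣ d n' := by
    intro n n' h
    rw [← hdvd_iff]
    exact Nat.ModEq.of_dvd (pow_dvd_pow b h) (hdone n')
  set x := g ^ d 2 with hxdef
  have hx2 : 2 ≤ x := by
    calc 2 ≤ g := hg
      _ ≤ g ^ d 2 := Nat.le_self_pow (hdpos 2).ne' g
  have hxb2 : b ^ 2 ∣ x - 1 := (modeq_one_iff_dvd (by omega)).mp (hdone 2)
  set w : ℕ → ℕ := fun p => (x - 1).factorization p with hw
  -- prime facts
  have hpfacts : ∀ p ∈ b.primeFactors, p.Prime ∧ p ∣ x - 1 ∧ (p = 2 → 4 ∣ x - 1) := by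
    intro p hp
    obtain ⟨hpp, hpb, -⟩ := Nat.mem_primeFactors.mp hp
    refine ⟨hpp, ?_, ?_⟩
    · exact (hpb.trans (dvd_pow_self b two_ne_zero)).trans hxb2
    · rintro rfl
      have : (4:ℕ) ∣ b ^ 2 := by
        obtain ⟨c, rfl⟩ := hpb
        exact ⟨c ^ 2, by ring⟩
      exact this.trans hxb2
  have hxs0 : ∀ s : ℕ, 1 ≤ s → x ^ s - 1 ≠ 0 := by
    intro s hs
    have : 2 ≤ x ^ s := le_trans hx2 (Nat.le_self_pow (by omega) x)
    omega
  have hval : ∀ p ∈ b.primeFactors, ∀ s : ℕ, 1 ≤ s →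
      (x ^ s - 1).factorization p = w p + s.factorization p := by
    intro p hp s hs
    obtain ⟨hpp, h1, h2⟩ := hpfacts p hp
    exact lte_lite hpp s x hx2 h1 h2 hs
  -- characterization of d n for n ≥ 2
  have hs_decomp : ∀ n, 2 ≤ n → ∃ s, 1 ≤ s ∧ d n = d 2 * s ∧
      ∀ p ∈ b.primeFactors, n * b.factorization p ≤ w p + s.factorization p := by
    intro n hn
    obtain ⟨s, hs⟩ := hmono 2 n hn
    have hs1 : 1 ≤ s := by
      rcases Nat.eq_zero_or_pos s with h | h
      · exfalso; rw [h, mul_zero] at hs; exact (hdpos n).ne' hs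
      · exact h
    refine ⟨s, hs1, hs, ?_⟩
    intro p hp
    have h1 : b ^ n ∣ g ^ d n - 1 := (modeq_one_iff_dvd (by omega)).mp (hdone n)
    have h2 : g ^ d n = x ^ s := by rw [hxdef, ← pow_mul, ← hs]
    rw [h2] at h1
    have := (pow_dvd_iff (by omega) (hxs0 s hs1) n).mp h1 p hp
    rwa [hval p hp s hs1] at this
  have hd_le : ∀ n s, 1 ≤ s →
      (∀ p ∈ b.primeFactors, n * b.factorization p ≤ w p + s.factorization p) →
      d n ∣ d 2 * s := by
    intro n s hs1 hcon
    rw [← hdvd_iff]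
    have h2 : g ^ (d 2 * s) = x ^ s := by rw [hxdef, ← pow_mul]
    rw [h2, modeq_one_iff_dvd (by omega : (1:ℕ) ≤ x)]
    rw [pow_dvd_iff (by omega) (hxs0 s hs1) n]
    intro p hp
    rw [hval p hp s hs1]
    exact hcon p hp
  -- exact valuation of s n for suitable n
  have hs_exact : ∀ n, 2 ≤ n → ∀ s, 1 ≤ s → d n = d 2 * s →
      (∀ p ∈ b.primeFactors, n * b.factorization p ≤ w p + s.factorization p) →
      ∀ p ∈ b.primeFactors, w p ≤ n →
      w p + s.factorization p = n * b.factorization p := by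
    intro n hn s hs1 hds hcon p hp hwn
    have hvb : 1 ≤ b.factorization p := by
      obtain ⟨hpp, hpb, -⟩ := Nat.mem_primeFactors.mp hp
      exact (Nat.Prime.factorization_pos_of_dvd hpp (by omega) hpb)
    have hle := hcon p hp
    by_contra hne
    -- then w p + s.factorization p > n * v_p b, so s.factorization p ≥ 1 since n*v ≥ n ≥ w p
    have hgt : n * b.factorization p < w p + s.factorization p := by omega
    have hsp : 1 ≤ s.factorization p := by
      have : w p ≤ n * b.factorization p := by
        calc w p ≤ n := hwn
          _ = n * 1 := (mul_one n).symm
          _ ≤ n * b.factorization p := Nat.mul_le_mul_left n hvb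
      omega
    have hpds : p ∣ s := Nat.dvd_of_factorization_pos (by omega)
    obtain ⟨s', rfl⟩ := hpds
    have hpp : p.Prime := (Nat.mem_primeFactors.mp hp).1
    have hs'1 : 1 ≤ s' := by
      rcases Nat.eq_zero_or_pos s' with h | h
      · exfalso; rw [h, mul_zero] at hs1; omega
      · exact h
    have hfac : ∀ q, (p * s').factorization q = (Nat.factorization p) q + s'.factorization q := by
      intro q
      rw [Nat.factorization_mul hpp.pos.ne' (by omega), Finsupp.add_apply]
    have hcon' : ∀ q ∈ b.primeFactors, n * b.factorization q ≤ w q + s'.factorization q := by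
      intro q hq
      rcases eq_or_ne q p with rfl | hqp
      · have hft := hfac q
        simp only [hpp.factorization, Finsupp.single_eq_same] at hft
        omega
      · have hq2 := hcon q hq
        have hft := hfac q
        simp only [hpp.factorization, Finsupp.single_eq_of_ne' (Ne.symm hqp)] at hft
        omega
    have hdvd := hd_le n s' hs'1 hcon'
    have hlt : d 2 * s' < d n := by
      rw [hds]
      have : s' < p * s' := by nlinarith [hpp.two_le]
      exact (Nat.mul_lt_mul_left (hdpos 2)).mpr this
    have := Nat.le_of_dvd (Nat.mul_pos (hdpos 2) hs'1) hdvd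
    have hd2 : 0 < d 2 * s' := Nat.mul_pos (hdpos 2) hs'1
    omega
  -- the step lemma
  have hstep : ∀ m, 2 ≤ m → (∀ p ∈ b.primeFactors, w p ≤ m) → d (m + 1) = b * d m := by
    intro m hm hwm
    obtain ⟨s1, hs11, hds1, hcon1⟩ := hs_decomp m hm
    obtain ⟨s2, hs21, hds2, hcon2⟩ := hs_decomp (m + 1) (by omega)
    have hex1 : ∀ p ∈ b.primeFactors, w p + s1.factorization p = m * b.factorization p :=
      fun p hp => hs_exact m hm s1 hs11 hds1 hcon1 p hp (hwm p hp)
    have hex2 : ∀ p ∈ b.primeFactors, w p + s2.factorization p = (m+1) * b.factorization p :=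
      fun p hp => hs_exact (m+1) (by omega) s2 hs21 hds2 hcon2 p hp (by have := hwm p hp; omega)
    -- d (m+1) ∣ b * d m
    have hdvd1 : d (m + 1) ∣ b * d m := by
      have : b * d m = d 2 * (b * s1) := by rw [hds1]; ring
      rw [this]
      apply hd_le (m+1) (b * s1) (Nat.mul_pos (by omega) hs11)
      intro p hp
      have hbf : (b * s1).factorization p = b.factorization p + s1.factorization p := by
        rw [Nat.factorization_mul (by omega) (by omega), Finsupp.add_apply]
      rw [hbf]
      have := hex1 p hp
      have hmul : (m+1) * b.factorization p = m * b.factorization p + b.factorization p := by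
        ring
      omega
    obtain ⟨e, hde⟩ := hmono m (m+1) (by omega)
    have he1 : 1 ≤ e := by
      rcases Nat.eq_zero_or_pos e with h | h
      · exfalso; rw [h, mul_zero] at hde; exact (hdpos (m+1)).ne' hde
      · exact h
    have heb : e ∣ b := by
      have h1 : d m * e ∣ d m * b := by rw [← hde, mul_comm (d m) b]; exact hdvd1
      exact (mul_dvd_mul_iff_left (hdpos m).ne').mp h1
    have hbe : b ∣ e := by
      rw [← Nat.factorization_le_iff_dvd (by omega) (by omega)]
      intro p
      by_cases hp : p ∈ b.primeFactors
      · have hA := hex1 p hp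
        have hB := hex2 p hp
        have hC : (d (m+1)).factorization p = (d m).factorization p + e.factorization p := by
          rw [hde, Nat.factorization_mul (hdpos m).ne' (by omega), Finsupp.add_apply]
        have hD : (d (m+1)).factorization p = (d 2).factorization p + s2.factorization p := by
          rw [hds2, Nat.factorization_mul (hdpos 2).ne' (by omega), Finsupp.add_apply]
        have hE : (d m).factorization p = (d 2).factorization p + s1.factorization p := by
          rw [hds1, Nat.factorization_mul (hdpos 2).ne' (by omega), Finsupp.add_apply]
        have hmul : (m+1) * b.factorization p = m * b.factorization p + b.factorization p := by
          ring
        omega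
      · have : b.factorization p = 0 := by
          rw [← Nat.support_factorization] at hp
          exact Finsupp.notMem_support_iff.mp hp
        simp [this]
    have heq : e = b := Nat.dvd_antisymm heb hbe
    rw [hde, heq, mul_comm]
  -- existence of a good c
  set c0 := x + 2 with hc0
  have hwbound : ∀ p ∈ b.primeFactors, ∀ m, c0 ≤ m → w p ≤ m := by
    intro p hp m hm
    have : w p < x - 1 := Nat.factorization_lt p (by omega)
    omega
  have hgood : ∀ m, c0 ≤ m → ∀ t : ℕ, d (m + t) = b ^ t * d m := by
    intro m hm t
    induction t with
    | zero => simp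
    | succ u ih =>
      have h1 : d (m + u + 1) = b * d (m + u) :=
        hstep (m + u) (by omega) (fun p hp => by have := hwbound p hp (m+u) (by omega); omega)
      calc d (m + (u + 1)) = d (m + u + 1) := by ring_nf
        _ = b * d (m + u) := h1
        _ = b * (b ^ u * d m) := by rw [ih]
        _ = b ^ (u + 1) * d m := by ring
  have hSne : {c : ℕ | 0 < c ∧ ∀ t : ℕ, 0 < t →
      ordg g (b ^ (c + t)) = b ^ t * ordg g (b ^ c)}.Nonempty := by
    refine ⟨c0, by omega, fun t ht => ?_⟩
    exact hgood c0 le_rfl t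
  have hcmem := Nat.sInf_mem hSne
  set c := cg g b with hcdef
  have hc : 0 < c ∧ ∀ t : ℕ, 0 < t → d (c + t) = b ^ t * d c := hcmem
  refine ⟨hc.1, ?_⟩
  intro k t hck ht
  have hck' : ∀ s : ℕ, d (c + s) = b ^ s * d c := by
    intro s
    rcases Nat.eq_zero_or_pos s with h | h
    · subst h; simp
    · exact hc.2 s h
  obtain ⟨s, rfl⟩ := Nat.exists_eq_add_of_le hck
  have h1 : d (c + s + t) = b ^ (s + t) * d c := by
    rw [show c + s + t = c + (s + t) from by ring, hck' (s + t)]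
  rw [show (fun n => ordg g (b ^ n)) = d from rfl] at *
  show d (c + s + t) = b ^ t * d (c + s)
  rw [h1, hck' s, pow_add]
  ring

end RTL

/-- For `t ≥ 1` and `k ≥ c_g(b)`, every remainder of `a/b^{k+t}` has the
unique form `(a·g^{i+m·ord_g(b^k)}) mod b^{k+t} = ((a·g^i) mod b^k) + n·b^k` with
`m, n ∈ {0,…,b^t−1}`; moreover, for each fixed `i` the resulting correspondence `m ↦ n`
is a bijection of `{0,…,b^t−1}` onto itself. -/
theorem remainders_t_levels (g b a k t : ℕ) (hg : 2 ≤ g) (hb : 1 < b)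
    (hbg : Nat.gcd b g = 1) (ha : 0 < a) (hab : Nat.gcd a b = 1) (hak : a < b ^ k)
    (ht : 1 ≤ t) (hk : cg g b ≤ k) :
    ∀ i : ℕ, i < ordg g (b ^ k) →
      (∀ m : ℕ, m < b ^ t → ∃! n : ℕ, n < b ^ t ∧
        a * g ^ (i + m * ordg g (b ^ k)) % b ^ (k + t) = a * g ^ i % b ^ k + n * b ^ k) ∧
      (∀ n : ℕ, n < b ^ t → ∃! m : ℕ, m < b ^ t ∧
        a * g ^ (i + m * ordg g (b ^ k)) % b ^ (k + t) = a * g ^ i % b ^ k + n * b ^ k) := by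
  intro i _
  have hb0 : 0 < b := by omega
  have hgb : Nat.Coprime g b := Nat.Coprime.symm hbg
  have hkpos : ∀ n : ℕ, (0:ℕ) < b ^ n := fun n => pow_pos hb0 n
  set d := ordg g (b ^ k) with hddef
  obtain ⟨hdpos, hgd⟩ := RTL.ordg_mem (hkpos k) (hgb.pow_right k)
  set B := b ^ (k + t) with hBdef
  have hBpos : 0 < B := hkpos (k + t)
  have hD : ordg g B = b ^ t * d := (RTL.key_order g b hg hb hbg).2 k t hk ht
  set r := a * g ^ i % b ^ k with hrdef
  -- the fundamental identity
  have hident : ∀ m : ℕ,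
      a * g ^ (i + m * d) % B = r + (a * g ^ (i + m * d) % B / b ^ k) * b ^ k := by
    intro m
    set N := a * g ^ (i + m * d) % B with hN
    have h1 : N ≡ a * g ^ (i + m * d) [MOD B] := (Nat.mod_modEq _ _).symm.symm
    have h2 : N ≡ a * g ^ (i + m * d) [MOD b ^ k] :=
      Nat.ModEq.of_dvd (pow_dvd_pow b (by omega)) h1
    have h3 : a * g ^ (i + m * d) ≡ a * g ^ i [MOD b ^ k] := by
      have he : g ^ (i + m * d) = g ^ i * (g ^ d) ^ m := by
        rw [← pow_mul, ← pow_add]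
        congr 1
        ring
      rw [he]
      calc a * (g ^ i * (g ^ d) ^ m) = a * g ^ i * (g ^ d) ^ m := by ring
        _ ≡ a * g ^ i * 1 ^ m [MOD b ^ k] := (hgd.pow m).mul_left _
        _ = a * g ^ i := by ring
    have h4 : N % b ^ k = r := h2.trans h3
    conv_lhs => rw [← Nat.div_add_mod N (b ^ k)]
    rw [h4]
    ring
  have hquot_lt : ∀ m : ℕ, a * g ^ (i + m * d) % B / b ^ k < b ^ t := by
    intro m
    have h1 : a * g ^ (i + m * d) % B < B := Nat.mod_lt _ hBpos
    have h2 : B = b ^ k * b ^ t := by rw [hBdef, pow_add]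
    exact Nat.div_lt_of_lt_mul (by omega)
  -- injectivity
  have hinj : ∀ m₁ m₂ : ℕ, m₁ < b ^ t → m₂ < b ^ t →
      a * g ^ (i + m₁ * d) % B = a * g ^ (i + m₂ * d) % B → m₁ = m₂ := by
    have main : ∀ m₁ m₂ : ℕ, m₁ ≤ m₂ → m₂ < b ^ t →
        a * g ^ (i + m₁ * d) % B = a * g ^ (i + m₂ * d) % B → m₁ = m₂ := by
      intro m₁ m₂ hle hlt heq
      have hmod : a * g ^ (i + m₁ * d) ≡ a * g ^ (i + m₂ * d) [MOD B] := heq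
      have hab' : Nat.Coprime a b := hab
      have hca : Nat.Coprime B a := (hab'.pow_right (k + t)).symm
      have h1 : g ^ (i + m₁ * d) ≡ g ^ (i + m₂ * d) [MOD B] :=
        Nat.ModEq.cancel_left_of_coprime hca hmod
      have hsplit : g ^ (i + m₂ * d) = g ^ (i + m₁ * d) * g ^ ((m₂ - m₁) * d) := by
        rw [← pow_add]
        congr 1
        have : m₁ * d ≤ m₂ * d := Nat.mul_le_mul_right d hle
        rw [Nat.sub_mul]
        omega
      have h2 : g ^ (i + m₁ * d) * 1 ≡ g ^ (i + m₁ * d) * g ^ ((m₂ - m₁) * d) [MOD B] := by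
        rw [mul_one, ← hsplit]
        exact h1
      have hcg2 : Nat.Coprime B (g ^ (i + m₁ * d)) := Nat.Coprime.pow (k + t) (i + m₁ * d) hbg
      have h3 : g ^ ((m₂ - m₁) * d) ≡ 1 [MOD B] :=
        (Nat.ModEq.cancel_left_of_coprime hcg2 h2).symm
      have h4 : ordg g B ∣ (m₂ - m₁) * d :=
        (RTL.ordg_dvd_iff hBpos (hgb.pow_right (k + t)) _).mp h3
      rw [hD] at h4
      have h5 : b ^ t ∣ m₂ - m₁ := (Nat.mul_dvd_mul_iff_right hdpos).mp h4
      have h6 : m₂ - m₁ < b ^ t := by omega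
      have h7 : m₂ - m₁ = 0 := Nat.eq_zero_of_dvd_of_lt h5 h6
      omega
    intro m₁ m₂ h1 h2 heq
    rcases le_total m₁ m₂ with h | h
    · exact main m₁ m₂ h h2 heq
    · exact (main m₂ m₁ h h1 heq.symm).symm
  -- the map as a function on Fin (b ^ t)
  set f : Fin (b ^ t) → Fin (b ^ t) :=
    fun m => ⟨a * g ^ (i + (m : ℕ) * d) % B / b ^ k, hquot_lt m⟩ with hf
  have hfinj : Function.Injective f := by
    intro m₁ m₂ hfeq
    have hq : a * g ^ (i + (m₁ : ℕ) * d) % B / b ^ k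
        = a * g ^ (i + (m₂ : ℕ) * d) % B / b ^ k := by
      simpa [hf] using congrArg Fin.val hfeq
    have hNeq : a * g ^ (i + (m₁ : ℕ) * d) % B = a * g ^ (i + (m₂ : ℕ) * d) % B := by
      rw [hident m₁, hident m₂, hq]
    exact Fin.ext (hinj m₁ m₂ m₁.isLt m₂.isLt hNeq)
  have hfsurj : Function.Surjective f := Finite.surjective_of_injective hfinj
  constructor
  · -- part 1 : for each m a unique n
    intro m hm
    refine ⟨a * g ^ (i + m * d) % B / b ^ k, ⟨hquot_lt m, hident m⟩, ?_⟩
    intro n' hn'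
    have h1 : r + n' * b ^ k = r + (a * g ^ (i + m * d) % B / b ^ k) * b ^ k :=
      hn'.2.symm.trans (hident m)
    have h2 : n' * b ^ k = (a * g ^ (i + m * d) % B / b ^ k) * b ^ k := by omega
    exact Nat.eq_of_mul_eq_mul_right (hkpos k) h2
  · -- part 2 : for each n a unique m
    intro n hn
    obtain ⟨m, hminv⟩ := hfsurj ⟨n, hn⟩
    have hmval : a * g ^ (i + (m : ℕ) * d) % B / b ^ k = n := by
      simpa [hf] using congrArg Fin.val hminv
    refine ⟨(m : ℕ), ⟨m.isLt, by rw [hident m, hmval]⟩, ?_⟩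
    intro m' hm'
    have hNeq : a * g ^ (i + m' * d) % B = a * g ^ (i + (m : ℕ) * d) % B := by
      rw [hident (m : ℕ), hmval, hm'.2]
    exact hinj m' m hm'.1 m.isLt hNeq
end

section
/- Let g ≥ 2, j ≥ 1 and b be integers with 0 < g^j ≤ b. Set h_1 = (⌈b/g^j⌉·g^j) mod b. Then for every s with 0 ≤ s < g^j, the minimum t_s = min{ t ∈ {0,…,b−1} : ⌊t·g^j/b⌋ = s } exists and is given by the closed formula t_s = (s·b + ((s·h_1) mod g^j))/g^j. -/
lemma master_sequence_formula_aux (G b : ℕ) (hG : 0 < G) (hb : G ≤ b)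
    (s : ℕ) (hs : s < G) :
    IsLeast {t : ℕ | t < b ∧ t * G / b = s}
      ((s * b + (s * ((b + G - 1) / G * G % b)) % G) / G) := by
  have hbpos : 0 < b := lt_of_lt_of_le hG hb
  have e1 := Nat.div_add_mod (b + G - 1) G
  have e1' : (b + G - 1) % G < G := Nat.mod_lt _ hG
  have hmc : (b + G - 1) / G * G = G * ((b + G - 1) / G) := mul_comm _ _
  have hcb : b ≤ (b + G - 1) / G * G := by omega
  have hcb2 : (b + G - 1) / G * G < b + G := by omega
  have hq : (b + G - 1) / G * G / b = 1 :=
    Nat.div_eq_of_lt_le (by omega) (by rw [Nat.succ_mul, one_mul]; omega)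
  have hh1 : (b + G - 1) / G * G % b = (b + G - 1) / G * G - b := by
    have e2 := Nat.div_add_mod ((b + G - 1) / G * G) b
    rw [hq] at e2
    omega
  -- the remainder term
  have hAG : (s * ((b + G - 1) / G * G % b)) % G < G := Nat.mod_lt _ hG
  have h5 : s * ((b + G - 1) / G * G % b) + s * b = s * ((b + G - 1) / G) * G := by
    rw [hh1]
    zify [hcb]
    ring
  have h6 : (s * ((b + G - 1) / G * G % b) + s * b) % G = 0 := by
    rw [h5]; exact Nat.mul_mod_left _ _
  have h7 : (s * b + (s * ((b + G - 1) / G * G % b)) % G) % G = 0 := by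
    rw [← h6, Nat.add_comm (s * ((b + G - 1) / G * G % b)) (s * b), Nat.add_mod,
      Nat.mod_mod_of_dvd _ dvd_rfl, ← Nat.add_mod]
  -- the candidate value
  have e3 := Nat.div_add_mod (s * b + (s * ((b + G - 1) / G * G % b)) % G) G
  have hmc2 : (s * b + (s * ((b + G - 1) / G * G % b)) % G) / G * G =
      G * ((s * b + (s * ((b + G - 1) / G * G % b)) % G) / G) := mul_comm _ _
  have ht0 : (s * b + (s * ((b + G - 1) / G * G % b)) % G) / G * G =
      s * b + (s * ((b + G - 1) / G * G % b)) % G := by omega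
  have hdiv : (s * b + (s * ((b + G - 1) / G * G % b)) % G) / G * G / b = s := by
    rw [ht0]
    refine Nat.div_eq_of_lt_le (Nat.le_add_right _ _) ?_
    rw [Nat.succ_mul]
    omega
  have hmemlt : (s * b + (s * ((b + G - 1) / G * G % b)) % G) / G < b := by
    by_contra h
    push_neg at h
    have h1 : b * G ≤ (s * b + (s * ((b + G - 1) / G * G % b)) % G) / G * G :=
      Nat.mul_le_mul_right _ h
    rw [ht0] at h1
    have h2 : (s + 1) * b ≤ G * b := Nat.mul_le_mul_right b hs
    rw [Nat.succ_mul] at h2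
    have h3 : b * G = G * b := mul_comm _ _
    omega
  constructor
  · exact ⟨hmemlt, hdiv⟩
  · intro t ht
    obtain ⟨htb, hts⟩ := ht
    have h1 : s * b ≤ t * G := by
      have := Nat.div_mul_le_self (t * G) b
      rwa [hts] at this
    have h2 : (s * b + (s * ((b + G - 1) / G * G % b)) % G) / G * G < (t + 1) * G := by
      rw [ht0, Nat.succ_mul]
      omega
    have := Nat.lt_of_mul_lt_mul_right h2
    omega

/-- For `g ≥ 2`, `j ≥ 1` and `g^j ≤ b`, with
`h₁ = (⌈b/g^j⌉·g^j) mod b`, for every `s < g^j` the master-sequence entry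
`t_s = min{ t ∈ {0,…,b−1} : ⌊t·g^j/b⌋ = s }` exists and equals
`(s·b + ((s·h₁) mod g^j))/g^j`. -/
theorem master_sequence_formula (g j b : ℕ) (hg : 2 ≤ g) (hj : 1 ≤ j) (hb : g ^ j ≤ b) :
    ∀ s : ℕ, s < g ^ j →
      IsLeast {t : ℕ | t < b ∧ t * g ^ j / b = s}
        ((s * b + (s * ((b + g ^ j - 1) / g ^ j * g ^ j % b)) % g ^ j) / g ^ j) := by
  intro s hs
  have hG : 0 < g ^ j := Nat.pow_pos (by omega)
  exact master_sequence_formula_aux (g ^ j) b hG hb s hs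
end

section
/- Let g ≥ 2 be an integer, a/b a purely periodic proper fraction (0 < a < b, gcd(a,b) = 1, gcd(b,g) = 1), and j ≥ 1. The g-ary expansion of a/b has complexity g^j (i.e. for every s ∈ {0,…,g^j−1} there exists i ≥ j with ⌊a·g^i/b⌋ mod g^j = s) if and only if both: (1) g^j ≤ b, and (2) for every s ∈ {0,…,g^j−1} there exists i ≥ 0 with t_s ≤ (a·g^i) mod b < t_{s+1}, where t_s = min{ t ∈ {0,…,b−1} : ⌊t·g^j/b⌋ = s } for 0 ≤ s < g^j and t_{g^j} = b. -/
/-- The master sequence: for `s < g^j`, `ts g j b s` is the least `t ∈ {0,…,b−1}` with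
`⌊t·g^j/b⌋ = s`; and `ts g j b s = b` for `s ≥ g^j` (in particular `t_{g^j} = b`). -/
noncomputable def ts (g j b s : ℕ) : ℕ :=
  if s < g ^ j then sInf {t : ℕ | t < b ∧ t * g ^ j / b = s} else b

/-- Discrete intermediate value theorem for step-at-most-1 functions. -/
lemma nat_ivt (f : ℕ → ℕ) (s : ℕ) (hstep : ∀ t, f (t + 1) ≤ f t + 1) (h0 : f 0 ≤ s) :
    ∀ n, s ≤ f n → ∃ t, t ≤ n ∧ f t = s := by
  intro n
  induction n with
  | zero => intro h; exact ⟨0, le_refl 0, le_antisymm h0 h⟩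
  | succ n ih =>
    intro h
    by_cases h' : s ≤ f n
    · obtain ⟨t, ht, hft⟩ := ih h'
      exact ⟨t, ht.trans (Nat.le_succ n), hft⟩
    · push_neg at h'
      have := hstep n
      exact ⟨n + 1, le_refl _, by omega⟩

/-- Each level set of `t ↦ ⌊t·g^j/b⌋` with level `s < g^j` is nonempty when `g^j ≤ b`. -/
lemma level_nonempty (g j b s : ℕ) (hgj : 0 < g ^ j) (hb : g ^ j ≤ b) (hs : s < g ^ j) :
    ∃ t, t < b ∧ t * g ^ j / b = s := by
  have hb0 : 0 < b := lt_of_lt_of_le hgj hb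
  set N := g ^ j with hN
  have hdm := Nat.div_add_mod (s * b + N - 1) N
  have hmod := Nat.mod_lt (s * b + N - 1) hgj
  set q := (s * b + N - 1) / N with hq
  set r := (s * b + N - 1) % N with hr
  have h1 : s * b ≤ N * q := by omega
  have h2 : N * q < s * b + b := by omega
  have h3 : q < b := by
    have : N * q < N * b := by
      calc N * q < s * b + b := h2
        _ = (s + 1) * b := by ring
        _ ≤ N * b := Nat.mul_le_mul_right b hs
    exact lt_of_mul_lt_mul_left this (Nat.zero_le N)
  have h4 : s * b ≤ q * N := by rwa [mul_comm q N]
  have h5 : q * N < (s + 1) * b := by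
    have hsb : (s + 1) * b = s * b + b := by ring
    rw [mul_comm q N, hsb]; omega
  exact ⟨q, h3, Nat.div_eq_of_lt_le h4 h5⟩

/-- Interval characterization: for `r < b` and `s < g^j`,
`⌊r·g^j/b⌋ = s` iff `t_s ≤ r < t_{s+1}`. -/
lemma mem_interval_iff (g j b r s : ℕ) (hgj : 0 < g ^ j) (hb : g ^ j ≤ b)
    (hr : r < b) (hs : s < g ^ j) :
    r * g ^ j / b = s ↔ ts g j b s ≤ r ∧ r < ts g j b (s + 1) := by
  have hb0 : 0 < b := lt_of_lt_of_le hgj hb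
  have hne : {t : ℕ | t < b ∧ t * g ^ j / b = s}.Nonempty := level_nonempty g j b s hgj hb hs
  have hmem := Nat.sInf_mem hne
  have hmemf : sInf {t : ℕ | t < b ∧ t * g ^ j / b = s} * g ^ j / b = s := hmem.2
  have hmono : ∀ t u : ℕ, t ≤ u → t * g ^ j / b ≤ u * g ^ j / b :=
    fun t u h => Nat.div_le_div_right (Nat.mul_le_mul_right _ h)
  have hstep : ∀ t, (t + 1) * g ^ j / b ≤ t * g ^ j / b + 1 := by
    intro t
    have hle : (t + 1) * g ^ j ≤ t * g ^ j + b := by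
      have : (t + 1) * g ^ j = t * g ^ j + g ^ j := by ring
      omega
    calc (t + 1) * g ^ j / b ≤ (t * g ^ j + b) / b := Nat.div_le_div_right hle
      _ = t * g ^ j / b + 1 := Nat.add_div_right _ hb0
  simp only [ts, if_pos hs]
  constructor
  · intro hfr
    refine ⟨Nat.sInf_le ⟨hr, hfr⟩, ?_⟩
    by_cases h1 : s + 1 < g ^ j
    · simp only [if_pos h1]
      by_contra hcon
      push_neg at hcon
      have hmem1 := Nat.sInf_mem (show {t : ℕ | t < b ∧ t * g ^ j / b = s + 1}.Nonempty from
        level_nonempty g j b (s + 1) hgj hb h1)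
      have hmem1f : sInf {t : ℕ | t < b ∧ t * g ^ j / b = s + 1} * g ^ j / b = s + 1 := hmem1.2
      have := hmono _ _ hcon
      rw [hmem1f, hfr] at this
      omega
    · simp only [if_neg h1]; exact hr
  · rintro ⟨h1, h2⟩
    have hlow : s ≤ r * g ^ j / b := by
      have := hmono _ _ h1
      rwa [hmemf] at this
    by_cases hcase : s + 1 < g ^ j
    · simp only [if_pos hcase] at h2
      by_contra hne'
      have hge : s + 1 ≤ r * g ^ j / b := by omega
      have h00 : (0 : ℕ) * g ^ j / b ≤ s + 1 := by simp
      obtain ⟨t, htr, hft⟩ := nat_ivt (fun t => t * g ^ j / b) (s + 1) hstep h00 r hge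
      have ht_b : t < b := lt_of_le_of_lt htr hr
      have := Nat.sInf_le (show t ∈ {t : ℕ | t < b ∧ t * g ^ j / b = s + 1} from ⟨ht_b, hft⟩)
      omega
    · have hupper : r * g ^ j / b < g ^ j := by
        rw [Nat.div_lt_iff_lt_mul hb0]
        calc r * g ^ j < b * g ^ j := by
              exact Nat.mul_lt_mul_of_lt_of_le hr (le_refl _) hgj
          _ = g ^ j * b := mul_comm _ _
      omega

/-- The `j`-word of the expansion at position `m + j` is `⌊(a·g^m mod b)·g^j/b⌋`. -/
lemma word_eq (g a b j m : ℕ) (hb : 0 < b) (hgj : 0 < g ^ j) :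
    (a * g ^ (m + j) / b) % g ^ j = (a * g ^ m % b) * g ^ j / b := by
  have h := Nat.div_add_mod (a * g ^ m) b
  set q := a * g ^ m / b with hq
  set r := a * g ^ m % b with hrdef
  have hr : r < b := Nat.mod_lt _ hb
  have h1 : a * g ^ (m + j) = b * (q * g ^ j) + r * g ^ j := by
    rw [pow_add, ← mul_assoc, ← h]; ring
  have h2 : a * g ^ (m + j) / b = q * g ^ j + r * g ^ j / b := by
    rw [h1, Nat.mul_add_div hb]
  have h3 : r * g ^ j / b < g ^ j := by
    rw [Nat.div_lt_iff_lt_mul hb]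
    calc r * g ^ j < b * g ^ j := Nat.mul_lt_mul_of_lt_of_le hr (le_refl _) hgj
      _ = g ^ j * b := mul_comm _ _
  rw [h2, add_comm, Nat.add_mul_mod_self_right, Nat.mod_eq_of_lt h3]

/-- The `g`-ary expansion of a purely periodic proper fraction `a/b` has
complexity `g^j` (every `j`-word `s < g^j` occurs, i.e. `s = ⌊a·g^i/b⌋ mod g^j` for some
`i ≥ j`) if and only if `g^j ≤ b` and every interval `[t_s, t_{s+1})` contains some
power residue `(a·g^i) mod b`. -/
theorem complexity_iff (g a b j : ℕ) (hg : 2 ≤ g) (ha : 0 < a) (hab : a < b)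
    (hcop : Nat.gcd a b = 1) (hbg : Nat.gcd b g = 1) (hj : 1 ≤ j) :
    (∀ s : ℕ, s < g ^ j → ∃ i : ℕ, j ≤ i ∧ (a * g ^ i / b) % g ^ j = s) ↔
      (g ^ j ≤ b ∧ ∀ s : ℕ, s < g ^ j → ∃ i : ℕ,
        ts g j b s ≤ a * g ^ i % b ∧ a * g ^ i % b < ts g j b (s + 1)) := by
  have hb0 : 0 < b := lt_of_le_of_lt (Nat.zero_le a) hab
  have hgj : 0 < g ^ j := Nat.pow_pos (n := j) (by omega)
  constructor
  · intro h
    have hcard : g ^ j ≤ b := by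
      have hsub : Finset.range (g ^ j) ⊆
          Finset.image (fun r => r * g ^ j / b) (Finset.range b) := by
        intro s hs
        rw [Finset.mem_range] at hs
        rw [Finset.mem_image]
        obtain ⟨i, hij, hi⟩ := h s hs
        obtain ⟨m, rfl⟩ : ∃ m, i = m + j := ⟨i - j, by omega⟩
        rw [word_eq g a b j m hb0 hgj] at hi
        exact ⟨a * g ^ m % b, Finset.mem_range.mpr (Nat.mod_lt _ hb0), hi⟩
      calc g ^ j = (Finset.range (g ^ j)).card := (Finset.card_range _).symm
        _ ≤ _ := Finset.card_le_card hsub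
        _ ≤ (Finset.range b).card := Finset.card_image_le
        _ = b := Finset.card_range b
    refine ⟨hcard, fun s hs => ?_⟩
    obtain ⟨i, hij, hi⟩ := h s hs
    obtain ⟨m, rfl⟩ : ∃ m, i = m + j := ⟨i - j, by omega⟩
    rw [word_eq g a b j m hb0 hgj] at hi
    exact ⟨m, (mem_interval_iff g j b _ s hgj hcard (Nat.mod_lt _ hb0) hs).mp hi⟩
  · rintro ⟨hcard, h⟩ s hs
    obtain ⟨i, h1, h2⟩ := h s hs
    refine ⟨i + j, Nat.le_add_left _ _, ?_⟩
    rw [word_eq g a b j i hb0 hgj]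
    exact (mem_interval_iff g j b _ s hgj hcard (Nat.mod_lt _ hb0) hs).mpr ⟨h1, h2⟩
end

section
/- Let g ≥ 2 be an integer, a/b a purely periodic proper fraction (0 < a < b, gcd(a,b) = 1, gcd(b,g) = 1), and j ≥ 1. Let G be the gap of the set of power residues of a/b, i.e. the maximal difference between consecutive elements of the sorted set {−1} ∪ { (a·g^i) mod b : i ≥ 0 } ∪ {b}. If ⌊b/g^j⌋ ≥ G, then the g-ary expansion of a/b has complexity g^j, i.e. for every s ∈ {0,…,g^j−1} there exists i ≥ j with ⌊a·g^i/b⌋ mod g^j = s. -/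
/-- Let `G` be the gap of `a/b`, i.e. the greatest difference `r' − r''`
over pairs of consecutive elements `r'' < r'` of the sorted set
`{−1} ∪ {(a·g^i) mod b : i ≥ 0} ∪ {b}`. If `⌊b/g^j⌋ ≥ G`, then the `g`-ary expansion of
`a/b` has complexity `g^j`. -/
theorem gap_criterion_sufficient (g a b j : ℕ) (G : ℤ) (hg : 2 ≤ g) (ha : 0 < a)
    (hab : a < b) (hcop : Nat.gcd a b = 1) (hbg : Nat.gcd b g = 1) (hj : 1 ≤ j)
    (hG : IsGreatest {d : ℤ |
        ∃ r'' ∈ ({-1, (b : ℤ)} ∪ {r : ℤ | ∃ i : ℕ, r = ((a * g ^ i % b : ℕ) : ℤ)}),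
        ∃ r' ∈ ({-1, (b : ℤ)} ∪ {r : ℤ | ∃ i : ℕ, r = ((a * g ^ i % b : ℕ) : ℤ)}),
          r'' < r' ∧
          (∀ x ∈ ({-1, (b : ℤ)} ∪ {r : ℤ | ∃ i : ℕ, r = ((a * g ^ i % b : ℕ) : ℤ)}),
            ¬(r'' < x ∧ x < r')) ∧
          d = r' - r''} G)
    (hbig : G ≤ ((b / g ^ j : ℕ) : ℤ)) :
    ∀ s : ℕ, s < g ^ j → ∃ i : ℕ, j ≤ i ∧ (a * g ^ i / b) % g ^ j = s := by
  intro s hs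
  set S : Set ℤ := {-1, (b : ℤ)} ∪ {r : ℤ | ∃ i : ℕ, r = ((a * g ^ i % b : ℕ) : ℤ)} with hSdef
  obtain ⟨Gmem, Gub⟩ := hG
  have hG1 : 1 ≤ G := by
    obtain ⟨r0, _, r1, _, hlt, _, hGeq⟩ := Gmem
    omega
  set M : ℕ := g ^ j with hMdef
  have hM : 0 < M := Nat.pow_pos (n := j) (by omega)
  set q : ℕ := b / M with hqdef
  -- key gap-hitting lemma
  have key : ∀ L : ℤ, 0 ≤ L → L + G ≤ (b : ℤ) →
      ∃ i0 : ℕ, L ≤ ((a * g ^ i0 % b : ℕ) : ℤ) ∧ ((a * g ^ i0 % b : ℕ) : ℤ) < L + G := by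
    intro L hL0 hLb
    have hneg1S : (-1 : ℤ) ∈ S := by left; left; rfl
    have hbS : (b : ℤ) ∈ S := by left; right; rfl
    obtain ⟨r'', ⟨hr''S, hr''L⟩, hmax⟩ :=
      Int.exists_greatest_of_bdd (P := fun x => x ∈ S ∧ x < L)
        ⟨L, fun z hz => hz.2.le⟩ ⟨-1, hneg1S, by omega⟩
    obtain ⟨r', ⟨hr'S, hr'gt⟩, hmin⟩ :=
      Int.exists_least_of_bdd (P := fun x => x ∈ S ∧ r'' < x)
        ⟨r'', fun z hz => hz.2.le⟩ ⟨(b : ℤ), hbS, by omega⟩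
    have hgap : r' - r'' ≤ G := by
      apply Gub
      refine ⟨r'', hr''S, r', hr'S, hr'gt, ?_, rfl⟩
      intro x hxS hx
      exact absurd (hmin x ⟨hxS, hx.1⟩) (not_le.2 hx.2)
    have hr'L : L ≤ r' := by
      by_contra h
      exact absurd (hmax r' ⟨hr'S, by omega⟩) (not_le.2 hr'gt)
    have hr'ub : r' < L + G := by omega
    rcases hr'S with (h1 | h1) | h1
    · omega
    · rw [Set.mem_singleton_iff] at h1; omega
    · obtain ⟨i0, hi0⟩ := h1
      exact ⟨i0, by omega, by omega⟩
  -- arithmetic setup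
  set Lnat : ℕ := (s * b + M - 1) / M with hLdef
  set u : ℕ := (s * b + M - 1) % M with hudef
  have hdm : Lnat * M + u = s * b + M - 1 := Nat.div_add_mod' _ _
  have hu : u < M := Nat.mod_lt _ hM
  set t : ℕ := b % M with htdef
  have hMq : q * M + t = b := Nat.div_add_mod' b M
  have ht : t < M := Nat.mod_lt _ hM
  have hsM : s + 1 ≤ M := hs
  -- F1 : s*b ≤ Lnat * M
  have F1 : s * b ≤ Lnat * M := by omega
  -- F3 : Lnat + q ≤ b
  have F3 : Lnat + q ≤ b := by
    have hqle : q ≤ b := Nat.div_le_self b M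
    have h1 : s * b ≤ M * (b - q) := by
      have e1 : M * (b - q) = M * b - M * q := Nat.mul_sub M b q
      have h2 : s * b ≤ (M - 1) * b := Nat.mul_le_mul_right b (by omega)
      have h3 : (M - 1) * b + 1 * b = M * b := by
        rw [← Nat.add_mul]; congr 1; omega
      have h4 : M * q = q * M := Nat.mul_comm M q
      omega
    have h5 : Lnat ≤ b - q :=
      (Nat.div_le_iff_le_mul_add_pred hM).2 (by omega)
    omega
  have hGq : G ≤ (q : ℤ) := hbig
  obtain ⟨i0, hlo, hhi⟩ := key (Lnat : ℤ) (by positivity) (by push_cast; omega)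
  set rn : ℕ := a * g ^ i0 % b with hrndef
  have hlo' : Lnat ≤ rn := by exact_mod_cast hlo
  have hhi' : rn < Lnat + q := by
    have : (rn : ℤ) < (Lnat : ℤ) + q := by omega
    exact_mod_cast this
  -- digit bounds for rn
  have hd1 : s * b ≤ rn * M := le_trans F1 (Nat.mul_le_mul_right M hlo')
  have hd2 : rn * M < (s + 1) * b := by
    have h1 : rn * M ≤ (Lnat + q - 1) * M := Nat.mul_le_mul_right M (by omega)
    have h2 : (Lnat + q - 1) * M + M = (Lnat + q) * M := by
      have e : Lnat + q - 1 + 1 = Lnat + q := by omega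
      calc (Lnat + q - 1) * M + M = (Lnat + q - 1 + 1) * M := by ring
        _ = (Lnat + q) * M := by rw [e]
    have h3 : (Lnat + q) * M = Lnat * M + q * M := by ring
    have h6 : (s + 1) * b = s * b + b := by ring
    omega
  -- conclude
  refine ⟨i0 + j, by omega, ?_⟩
  have hb0 : 0 < b := by omega
  have hsplit : a * g ^ (i0 + j) = b * (a * g ^ i0 / b) * M + rn * M := by
    rw [pow_add]
    have hdb := Nat.div_add_mod (a * g ^ i0) b
    calc a * (g ^ i0 * g ^ j) = (a * g ^ i0) * M := by rw [hMdef]; ring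
      _ = (b * (a * g ^ i0 / b) + rn) * M := by rw [hdb]
      _ = b * (a * g ^ i0 / b) * M + rn * M := by ring
  have hrdiv : rn * M / b = s := Nat.div_eq_of_lt_le (by omega) (by omega)
  have hdiv : a * g ^ (i0 + j) / b = a * g ^ i0 / b * M + s := by
    rw [hsplit,
      show b * (a * g ^ i0 / b) * M + rn * M = rn * M + (a * g ^ i0 / b * M) * b by ring,
      Nat.add_mul_div_right _ _ hb0, hrdiv]
    omega
  rw [hdiv, Nat.mul_add_mod', Nat.mod_eq_of_lt hs]
end

section
/- Let g ≥ 2 be an integer, a/b a purely periodic proper fraction (0 < a < b, gcd(a,b) = 1, gcd(b,g) = 1), and j ≥ 1. Let G be the gap of the set of power residues of a/b, i.e. the maximal difference between consecutive elements of the sorted set {−1} ∪ { (a·g^i) mod b : i ≥ 0 } ∪ {b}. If the g-ary expansion of a/b has complexity g^j (for every s ∈ {0,…,g^j−1} there exists i ≥ j with ⌊a·g^i/b⌋ mod g^j = s), then ⌊b/g^j⌋ > G/2 − 1, equivalently 2·⌊b/g^j⌋ + 2 > G. Consequently, if ⌊b/g^j⌋ ≤ G/2 − 1 then the expansion does not have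 complexity g^j. -/
lemma key_lemma (g a b j : ℕ) (hg : 2 ≤ g) (hb : 2 ≤ b)
    (hcop : Nat.gcd a b = 1) (hbg : Nat.gcd b g = 1)
    (hcpx : ∀ s : ℕ, s < g ^ j → ∃ i : ℕ, j ≤ i ∧ (a * g ^ i / b) % g ^ j = s)
    (s : ℕ) (hs : s < g ^ j) :
    ∃ i : ℕ, 1 ≤ a * g ^ i % b ∧ s * b ≤ (a * g ^ i % b) * g ^ j ∧
      (a * g ^ i % b) * g ^ j < (s + 1) * b := by
  obtain ⟨i, hji, hs_eq⟩ := hcpx s hs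
  have hbpos : 0 < b := by omega
  have hNpos : 0 < g ^ j := pow_pos (by omega) j
  set i' := i - j with hi'def
  have hi : i = i' + j := by omega
  set r := a * g ^ i' % b with hrdef
  set q := a * g ^ i' / b with hqdef
  have hqr : b * q + r = a * g ^ i' := Nat.div_add_mod _ _
  have hrlt : r < b := Nat.mod_lt _ hbpos
  have hstep : a * g ^ i = b * (q * g ^ j) + r * g ^ j := by
    rw [hi, pow_add, ← mul_assoc, ← hqr]; ring
  have hfr : r * g ^ j / b < g ^ j :=
    Nat.div_lt_of_lt_mul ((Nat.mul_lt_mul_right hNpos).mpr hrlt)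
  have hdiv : a * g ^ i / b = q * g ^ j + r * g ^ j / b := by
    rw [hstep, Nat.mul_add_div hbpos]
  have hmod : (a * g ^ i / b) % g ^ j = r * g ^ j / b := by
    rw [hdiv, show q * g ^ j + r * g ^ j / b = g ^ j * q + r * g ^ j / b by ring,
      Nat.mul_add_mod, Nat.mod_eq_of_lt hfr]
  have hs' : r * g ^ j / b = s := by rw [← hs_eq, hmod]
  have hrpos : 1 ≤ r := by
    rcases Nat.eq_zero_or_pos r with h0 | h; swap; · exact h
    exfalso
    have hdvd : b ∣ a * g ^ i' := Nat.dvd_of_mod_eq_zero h0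
    have hc : Nat.Coprime b (a * g ^ i') := by
      have h1 : Nat.Coprime b a := Nat.coprime_comm.mp hcop
      have h2 : Nat.Coprime b (g ^ i') := Nat.Coprime.pow_right _ hbg
      exact h1.mul_right h2
    have := Nat.Coprime.eq_one_of_dvd hc hdvd
    omega
  refine ⟨i', hrpos, ?_, ?_⟩
  · rw [← hs']; exact Nat.div_mul_le_self _ _
  · have h4 := Nat.div_add_mod (r * g ^ j) b
    rw [hs'] at h4
    have h5 := Nat.mod_lt (r * g ^ j) hbpos
    calc r * g ^ j = b * s + r * g ^ j % b := h4.symm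
      _ < b * s + b := by omega
      _ = (s + 1) * b := by ring


/-- Let `G` be the gap of `a/b`, i.e. the greatest difference `r' − r''`
over pairs of consecutive elements `r'' < r'` of the sorted set
`{−1} ∪ {(a·g^i) mod b : i ≥ 0} ∪ {b}`. If the `g`-ary expansion of `a/b` has complexity
`g^j`, then `2·⌊b/g^j⌋ + 2 > G` (equivalently `⌊b/g^j⌋ > G/2 − 1`); consequently if
`⌊b/g^j⌋ ≤ G/2 − 1` the expansion does not have complexity `g^j`. -/
theorem gap_criterion_necessary (g a b j : ℕ) (G : ℤ) (hg : 2 ≤ g) (ha : 0 < a)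
    (hab : a < b) (hcop : Nat.gcd a b = 1) (hbg : Nat.gcd b g = 1) (hj : 1 ≤ j)
    (hG : IsGreatest {d : ℤ |
        ∃ r'' ∈ ({-1, (b : ℤ)} ∪ {r : ℤ | ∃ i : ℕ, r = ((a * g ^ i % b : ℕ) : ℤ)}),
        ∃ r' ∈ ({-1, (b : ℤ)} ∪ {r : ℤ | ∃ i : ℕ, r = ((a * g ^ i % b : ℕ) : ℤ)}),
          r'' < r' ∧
          (∀ x ∈ ({-1, (b : ℤ)} ∪ {r : ℤ | ∃ i : ℕ, r = ((a * g ^ i % b : ℕ) : ℤ)}),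
            ¬(r'' < x ∧ x < r')) ∧
          d = r' - r''} G)
    (hcpx : ∀ s : ℕ, s < g ^ j → ∃ i : ℕ, j ≤ i ∧ (a * g ^ i / b) % g ^ j = s) :
    G < 2 * ((b / g ^ j : ℕ) : ℤ) + 2 := by
  have hb2 : 2 ≤ b := by omega
  have hNpos : 0 < g ^ j := pow_pos (by omega) j
  have hN2 : 2 ≤ g ^ j := le_trans hg (Nat.le_self_pow (by omega) g)
  set N := g ^ j with hNdef
  set m := b / N with hmdef
  have hdm : N * m + b % N = b := Nat.div_add_mod b N
  have htlt : b % N < N := Nat.mod_lt _ hNpos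
  have htpos : 0 < b % N := by
    rcases Nat.eq_zero_or_pos (b % N) with h0 | h; swap; · exact h
    exfalso
    have hdvd : g ∣ b := dvd_trans (dvd_pow_self g (by omega : j ≠ 0))
      (Nat.dvd_of_mod_eq_zero h0)
    have : g ∣ Nat.gcd b g := Nat.dvd_gcd hdvd dvd_rfl
    rw [hbg] at this
    have := Nat.le_of_dvd one_pos this
    omega
  -- bounds on members of the set
  set S : Set ℤ := ({-1, (b : ℤ)} ∪ {r : ℤ | ∃ i : ℕ, r = ((a * g ^ i % b : ℕ) : ℤ)})
    with hSdef
  have hub : ∀ z ∈ S, z ≤ (b : ℤ) := by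
    intro z hz
    simp only [hSdef, Set.mem_union, Set.mem_insert_iff, Set.mem_singleton_iff,
      Set.mem_setOf_eq] at hz
    rcases hz with (rfl | rfl) | ⟨i, rfl⟩
    · have : (0 : ℤ) ≤ (b : ℤ) := Int.natCast_nonneg b
      omega
    · exact le_refl _
    · exact_mod_cast (Nat.mod_lt (a * g ^ i) (by omega : 0 < b)).le
  have hmemS : ∀ i : ℕ, ((a * g ^ i % b : ℕ) : ℤ) ∈ S := by
    intro i
    exact Set.mem_union_right _ ⟨i, rfl⟩
  obtain ⟨x, hx, y, hy, hxy, hbtw, hGeq⟩ := hG.1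
  by_contra hcon
  push_neg at hcon
  -- hcon : 2 * m + 2 ≤ G
  have hyb : y ≤ (b : ℤ) := hub y hy
  simp only [hSdef, Set.mem_union, Set.mem_insert_iff, Set.mem_singleton_iff,
    Set.mem_setOf_eq] at hx
  rcases hx with (rfl | rfl) | ⟨i0, hxres⟩
  · -- x = -1 : use block 0
    obtain ⟨i1, hr1, _, hr3⟩ := key_lemma g a b j hg hb2 hcop hbg hcpx 0 hNpos
    set r0 := a * g ^ i1 % b with hr0def
    have hmem := hmemS i1
    have hx0 : (-1 : ℤ) < (r0 : ℤ) := by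
      have : (0 : ℤ) ≤ (r0 : ℤ) := Int.natCast_nonneg _
      omega
    have hy0 : ¬((-1 : ℤ) < (r0 : ℤ) ∧ (r0 : ℤ) < y) := hbtw _ hmem
    have hyr0 : y ≤ (r0 : ℤ) := by
      rcases lt_or_ge (r0 : ℤ) y with h | h
      · exact absurd ⟨hx0, h⟩ hy0
      · exact h
    -- r0 * N < 1 * b = N * m + t < N * (m + 1) so r0 ≤ m
    have hr0m : r0 ≤ m := by
      by_contra hcm
      push_neg at hcm
      have h1 : (m + 1) * N ≤ r0 * N := Nat.mul_le_mul_right N hcm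
      have h2 : r0 * N < 1 * b := hr3
      nlinarith
    have : (r0 : ℤ) ≤ (m : ℤ) := by exact_mod_cast hr0m
    omega
  · -- x = b : contradiction with x < y ≤ b
    omega
  · -- x a residue
    set xn := a * g ^ i0 % b with hxndef
    have hxnb : xn < b := Nat.mod_lt _ (by omega)
    -- from the gap assumption: xn + 2m + 2 ≤ b in ℕ
    have hxn_le : (xn : ℤ) + 2 * m + 2 ≤ (b : ℤ) := by omega
    have hxn_le' : xn + 2 * m + 2 ≤ b := by exact_mod_cast hxn_le
    set s0 := xn * N / b with hs0def
    have h1 : s0 * b ≤ xn * N := Nat.div_mul_le_self _ _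
    have h2 : xn * N < (s0 + 1) * b := by
      have h4 := Nat.div_add_mod (xn * N) b
      have h5 := Nat.mod_lt (xn * N) (show 0 < b by omega)
      calc xn * N = b * s0 + xn * N % b := h4.symm
        _ < b * s0 + b := by omega
        _ = (s0 + 1) * b := by ring
    have h3 : s0 + 1 < N := by
      by_contra hcm
      push_neg at hcm  -- N ≤ s0 + 1
      have hA : (N - 1) * b ≤ s0 * b := Nat.mul_le_mul_right b (by omega)
      have hB : xn * N ≤ (b - 2 * m - 2) * N := Nat.mul_le_mul_right N (by omega)
      have hNb : 2 ≤ N := hN2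
      nlinarith [h1, hdm, htlt, Nat.sub_add_cancel (show 1 ≤ N by omega),
        Nat.sub_add_cancel hxn_le']
    obtain ⟨i1, hr1pos, hK1, hK2⟩ := key_lemma g a b j hg hb2 hcop hbg hcpx (s0 + 1) h3
    set r1 := a * g ^ i1 % b with hr1def
    have hmem := hmemS i1
    have hxr1 : xn < r1 := by
      have : xn * N < r1 * N := lt_of_lt_of_le h2 hK1
      exact Nat.lt_of_mul_lt_mul_right this
    have hx1 : x < (r1 : ℤ) := by rw [hxres]; exact_mod_cast hxr1
    have hy1 : ¬(x < (r1 : ℤ) ∧ (r1 : ℤ) < y) := hbtw _ hmem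
    have hyr1 : y ≤ (r1 : ℤ) := by
      rcases lt_or_ge (r1 : ℤ) y with h | h
      · exact absurd ⟨hx1, h⟩ hy1
      · exact h
    -- r1 * N < (s0+2) * b = s0*b + 2b ≤ xn*N + 2b < (xn + 2m + 2) * N
    have hfin : r1 < xn + 2 * m + 2 := by
      by_contra hcm
      push_neg at hcm
      have hC : (xn + 2 * m + 2) * N ≤ r1 * N := Nat.mul_le_mul_right N hcm
      have hcontra : (xn + 2 * m + 2) * N < (xn + 2 * m + 2) * N := by
        calc (xn + 2 * m + 2) * N ≤ r1 * N := hC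
          _ < (s0 + 2) * b := hK2
          _ = s0 * b + 2 * b := by ring
          _ ≤ xn * N + 2 * b := by omega
          _ = xn * N + 2 * (N * m) + 2 * (b % N) := by omega
          _ < xn * N + 2 * (N * m) + 2 * N := by omega
          _ = (xn + 2 * m + 2) * N := by ring
      exact absurd hcontra (lt_irrefl _)
    have : (r1 : ℤ) < (xn : ℤ) + 2 * m + 2 := by exact_mod_cast hfin
    omega
end
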